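/- arXiv:2108.11090 — 5 statements merged into one kernel-verified Lean document; each statement's English description precedes it below -/
import Mathlib

section
/- For every nonzero real number λ, all real numbers x, y, and every n ≥ 0, the fully degenerate Bell polynomials satisfy the addition formula φ_{n,λ}(x+y) = Σ_{l=0}^{n} C(n,l) φ_{l,λ}(x) φ_{n−l,λ}(y), where C(n,l) is the binomial coefficient. -/
open Nat PowerSeries Finset

noncomputable section

/-- λ-falling factorial (x)_{n,λ} = x(x−λ)···(x−(n−1)λ). -/
def dfall (l x : ℝ) (n : ℕ) : ℝ := ∏ i ∈ range n, (x - i * l)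

/-- degenerate exponential e_λ^x(t) = Σ (x)_{n,λ} t^n/n! as a formal power series. -/
def degExp (l x : ℝ) : PowerSeries ℝ := PowerSeries.mk fun n => dfall l x n / n !

/-- degenerate logarithm log_λ(1+t) = Σ_{n≥1} (∏_{j=1}^{n−1}(λ−j)) t^n/n!. -/
def degLog (l : ℝ) : PowerSeries ℝ :=
  PowerSeries.mk fun n => if n = 0 then 0 else (∏ j ∈ range (n - 1), (l - (j + 1))) / n !

/-- composition Σ_k a_k f^k, valid when f has zero constant term. -/
def psComp (a : ℕ → ℝ) (f : PowerSeries ℝ) : PowerSeries ℝ :=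
  PowerSeries.mk fun n => ∑ k ∈ range (n + 1), a k * PowerSeries.coeff n (f ^ k)

/-- e_λ^x(f), the degenerate exponential composed with f (f with zero constant term). -/
def degExpComp (l x : ℝ) (f : PowerSeries ℝ) : PowerSeries ℝ :=
  psComp (fun k => dfall l x k / k !) f

/-- degenerate Stirling numbers of the second kind. -/
def dS2 (l : ℝ) (n k : ℕ) : ℝ :=
  (n ! : ℝ) / k ! * PowerSeries.coeff n ((degExp l 1 - 1) ^ k)

/-- degenerate Stirling numbers of the first kind. -/
def dS1 (l : ℝ) (n k : ℕ) : ℝ :=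
  (n ! : ℝ) / k ! * PowerSeries.coeff n (degLog l ^ k)

/-- (signed) Stirling numbers of the first kind: coefficients of x(x-1)···(x-n+1). -/
def sS1 (n k : ℕ) : ℝ := (descPochhammer ℝ n).coeff k

/-- fully degenerate Bell polynomial φ_{n,λ}(x). -/
def dBell (l : ℝ) (n : ℕ) (x : ℝ) : ℝ := ∑ k ∈ range (n + 1), dS2 l n k * dfall l x k

/-- degenerate Whitney numbers of the second kind. -/
def dW (m : ℕ) (l : ℝ) (n k : ℕ) : ℝ :=
  (n ! : ℝ) / k ! *
    PowerSeries.coeff n (degExp l 1 * ((degExp l (m : ℝ) - 1) * PowerSeries.C (R := ℝ) (1 / m)) ^ k)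

/-- fully degenerate Dowling polynomial d_{m,λ}(n,x). -/
def dDowling (m : ℕ) (l : ℝ) (n : ℕ) (x : ℝ) : ℝ :=
  ∑ k ∈ range (n + 1), dW m l n k * dfall l x k

/-- division of a power series by t (coefficient shift). -/
def divT (f : PowerSeries ℝ) : PowerSeries ℝ :=
  PowerSeries.mk fun n => PowerSeries.coeff (n + 1) f

/-- degenerate Bernoulli polynomials β_{n,λ}(x): (t/(e_λ(t)−1)) e_λ^x(t) = Σ β_{n,λ}(x) tⁿ/n!. -/
def dBernoulliPoly (l : ℝ) (n : ℕ) (x : ℝ) : ℝ :=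
  (n ! : ℝ) * PowerSeries.coeff n ((divT (degExp l 1 - 1))⁻¹ * degExp l x)

/-- the λ-falling factorial polynomial (x)_{k,λ}. -/
def dfallPoly (l : ℝ) (k : ℕ) : Polynomial ℝ :=
  ∏ i ∈ range k, (Polynomial.X - Polynomial.C (i * l))

/-- degenerate poly-Bell polynomials B^{(r)}_{n,λ}(x). -/
def dPolyBell (r : ℤ) (l : ℝ) (n : ℕ) (x : ℝ) : ℝ :=
  (n ! : ℝ) * PowerSeries.coeff n
    (divT (psComp (fun k => if k = 0 then 0 else dfall l 1 k / ((k - 1)! * (k : ℝ) ^ r))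
        (degLog l)) *
      (divT (degExp l 1 - 1))⁻¹ * degExp l x)

/-- degenerate Bernoulli polynomials of the second kind b_{n,λ}(x). -/
def dBern2 (l : ℝ) (n : ℕ) (x : ℝ) : ℝ :=
  (n ! : ℝ) *
    PowerSeries.coeff n ((divT (degLog l))⁻¹ * PowerSeries.mk fun j => dfall 1 x j / j !)


lemma dfall_zero (l x : ℝ) : dfall l x 0 = 1 := by simp [dfall]

lemma dfall_succ (l x : ℝ) (n : ℕ) : dfall l x (n + 1) = dfall l x n * (x - n * l) := by
  simp [dfall, Finset.prod_range_succ]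

/-- Vandermonde for λ-falling factorials. -/
lemma dfall_add (l x y : ℝ) (n : ℕ) :
    dfall l (x + y) n
      = ∑ j ∈ range (n + 1), (n.choose j : ℝ) * dfall l x j * dfall l y (n - j) := by
  induction n with
  | zero => simp [dfall]
  | succ n ih =>
    rw [dfall_succ, ih, Finset.sum_mul]
    have key : ∀ j ∈ range (n + 1),
        (n.choose j : ℝ) * dfall l x j * dfall l y (n - j) * (x + y - n * l)
          = (n.choose j : ℝ) * (dfall l x (j + 1) * dfall l y (n - j))
            + (n.choose j : ℝ) * (dfall l x j * dfall l y (n - j + 1)) := by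
      intro j hj
      have hjn : j ≤ n := Nat.lt_succ_iff.mp (Finset.mem_range.mp hj)
      have hx : x + y - (n : ℝ) * l = (x - j * l) + (y - (n - j : ℕ) * l) := by
        have : ((n - j : ℕ) : ℝ) = (n : ℝ) - (j : ℝ) := by
          rw [Nat.cast_sub hjn]
        rw [this]; ring
      rw [hx, dfall_succ, dfall_succ]
      ring
    rw [Finset.sum_congr rfl key, Finset.sum_add_distrib]
    -- target: ∑ j ∈ range (n+2), C(n+1,j) fx j fy (n+1-j)
    rw [Finset.sum_range_succ' (fun j => (((n+1).choose j : ℝ)) * dfall l x j * dfall l y (n + 1 - j))]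
    simp only [Nat.choose_succ_succ, Nat.cast_add, Nat.succ_sub_succ]
    have e1 : ∑ j ∈ range (n + 1),
        (((n.choose j : ℝ) + (n.choose (j+1) : ℝ)) * dfall l x (j+1) * dfall l y (n - j))
        = (∑ j ∈ range (n + 1), (n.choose j : ℝ) * (dfall l x (j+1) * dfall l y (n - j)))
          + ∑ j ∈ range (n + 1), (n.choose (j+1) : ℝ) * dfall l x (j+1) * dfall l y (n - j) := by
      rw [← Finset.sum_add_distrib]
      apply Finset.sum_congr rfl
      intro j hj; ring
    rw [e1]
    have e2 : (∑ j ∈ range (n + 1), (n.choose (j+1) : ℝ) * dfall l x (j+1) * dfall l y (n - j))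
          + (n.choose 0 : ℝ) * (dfall l x 0 * dfall l y (n - 0 + 1))
        = ∑ j ∈ range (n + 1), (n.choose j : ℝ) * (dfall l x j * dfall l y (n - j + 1)) := by
      rw [Finset.sum_range_succ (fun j => (n.choose (j+1) : ℝ) * dfall l x (j+1) * dfall l y (n - j))]
      rw [Finset.sum_range_succ' (fun j => (n.choose j : ℝ) * (dfall l x j * dfall l y (n - j + 1)))]
      simp only [Nat.choose_succ_self, Nat.cast_zero, zero_mul, add_zero]
      congr 1
      apply Finset.sum_congr rfl
      intro j hj
      have hj' : j < n := Finset.mem_range.mp hj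
      have hnj : n - j = n - (j+1) + 1 := by omega
      rw [hnj]
      ring
    have e3 : ((n+1).choose 0 : ℝ) * dfall l x 0 * dfall l y (n + 1 - 0)
        = (n.choose 0 : ℝ) * (dfall l x 0 * dfall l y (n - 0 + 1)) := by
      simp [dfall_zero]
    rw [e3, ← e2]
    ring

/-- Cauchy-product form of Vandermonde. -/
lemma dfall_cauchy (l x y : ℝ) (s : ℕ) :
    dfall l (x + y) s / s !
      = ∑ k ∈ range (s + 1), dfall l x k / k ! * (dfall l y (s - k) / (s - k)!) := by
  rw [dfall_add, Finset.sum_div]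
  apply Finset.sum_congr rfl
  intro k hk
  have hks : k ≤ s := Nat.lt_succ_iff.mp (Finset.mem_range.mp hk)
  rw [Nat.cast_choose ℝ hks]
  have h1 : (k ! : ℝ) ≠ 0 := Nat.cast_ne_zero.mpr k.factorial_ne_zero
  have h2 : ((s - k)! : ℝ) ≠ 0 := Nat.cast_ne_zero.mpr (s - k).factorial_ne_zero
  have h3 : (s ! : ℝ) ≠ 0 := Nat.cast_ne_zero.mpr s.factorial_ne_zero
  field_simp

/-- coefficients below k of f^k vanish when constant coeff of f is 0. -/
lemma coeff_pow_zero {f : PowerSeries ℝ} (hf : constantCoeff f = 0) :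
    ∀ k n : ℕ, n < k → PowerSeries.coeff n (f ^ k) = 0 := by
  intro k
  induction k with
  | zero => intro n hn; omega
  | succ k ih =>
    intro n hn
    rw [pow_succ, PowerSeries.coeff_mul]
    apply Finset.sum_eq_zero
    intro p hp
    have hps : p.1 + p.2 = n := Finset.HasAntidiagonal.mem_antidiagonal.mp hp
    rcases Nat.eq_zero_or_pos p.2 with h2 | h2
    · have : PowerSeries.coeff p.2 f = 0 := by
        rw [h2, PowerSeries.coeff_zero_eq_constantCoeff, hf]
      rw [this, mul_zero]
    · have : p.1 < k := by omega
      rw [ih p.1 this, zero_mul]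

lemma constCoeff_degExpSub : constantCoeff (degExp 1 1 - 1) = 0 := by
  simp [degExp, dfall]

/-- dBell as a coefficient of the composed series. -/
lemma dBell_eq (l : ℝ) (n : ℕ) (x : ℝ) :
    dBell l n x = (n ! : ℝ) * PowerSeries.coeff n (degExpComp l x (degExp l 1 - 1)) := by
  rw [dBell, degExpComp, psComp, PowerSeries.coeff_mk, Finset.mul_sum]
  apply Finset.sum_congr rfl
  intro k hk
  rw [dS2]
  ring

/-- the main generating-function identity. -/
lemma degExpComp_mul (l : ℝ) (x y : ℝ) {f : PowerSeries ℝ}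
    (hf : constantCoeff f = 0) (n : ℕ) :
    PowerSeries.coeff n (degExpComp l (x + y) f)
      = PowerSeries.coeff n (degExpComp l x f * degExpComp l y f) := by
  classical
  set ax : ℕ → ℝ := fun k => dfall l x k / k ! with hax
  set ay : ℕ → ℝ := fun k => dfall l y k / k ! with hay
  -- coefficients of psComp agree with those of the finite sum up to n
  have hcoeff : ∀ (a : ℕ → ℝ) (m : ℕ), m ≤ n →
      PowerSeries.coeff m (psComp a f)
        = PowerSeries.coeff m (∑ k ∈ range (n + 1), PowerSeries.C (a k) * f ^ k) := by
    intro a m hm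
    rw [psComp, PowerSeries.coeff_mk, map_sum]
    simp only [PowerSeries.coeff_C_mul]
    apply Finset.sum_subset
    · exact Finset.range_subset_range.mpr (by omega)
    · intro k hk hk'
      have : m < k := by
        simp only [Finset.mem_range, not_lt] at hk'
        omega
      rw [coeff_pow_zero hf k m this, mul_zero]
  set Gx : PowerSeries ℝ := ∑ k ∈ range (n + 1), PowerSeries.C (ax k) * f ^ k with hGx
  set Gy : PowerSeries ℝ := ∑ k ∈ range (n + 1), PowerSeries.C (ay k) * f ^ k with hGy
  have hprod : PowerSeries.coeff n (degExpComp l x f * degExpComp l y f)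
      = PowerSeries.coeff n (Gx * Gy) := by
    rw [PowerSeries.coeff_mul, PowerSeries.coeff_mul]
    apply Finset.sum_congr rfl
    intro p hp
    have hps : p.1 + p.2 = n := Finset.HasAntidiagonal.mem_antidiagonal.mp hp
    rw [degExpComp, degExpComp, hcoeff ax p.1 (by omega), hcoeff ay p.2 (by omega)]
  rw [hprod]
  -- expand the product of finite sums
  have hGG : Gx * Gy
      = ∑ k ∈ range (n + 1), ∑ m ∈ range (n + 1),
          PowerSeries.C (ax k * ay m) * f ^ (k + m) := by
    rw [hGx, hGy, Finset.sum_mul_sum]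
    apply Finset.sum_congr rfl
    intro k _
    apply Finset.sum_congr rfl
    intro m _
    rw [map_mul, pow_add]
    ring
  rw [hGG, map_sum]
  simp only [map_sum, PowerSeries.coeff_C_mul]
  -- triangular reindexing
  have htri : ∑ k ∈ range (n + 1), ∑ m ∈ range (n + 1),
        ax k * ay m * PowerSeries.coeff n (f ^ (k + m))
      = ∑ s ∈ range (n + 1), ∑ k ∈ range (s + 1),
          ax k * ay (s - k) * PowerSeries.coeff n (f ^ s) := by
    have hb : ∀ s ∈ range (n+1), ∑ k ∈ range (s + 1), ax k * ay (s - k) * PowerSeries.coeff n (f ^ s)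
        = ∑ p ∈ Finset.HasAntidiagonal.antidiagonal s, ax p.1 * ay p.2 * PowerSeries.coeff n (f ^ (p.1 + p.2)) := by
      intro s hs
      rw [Finset.Nat.sum_antidiagonal_eq_sum_range_succ_mk]
      apply Finset.sum_congr rfl
      intro k hk
      have : k + (s - k) = s := by
        have := Nat.lt_succ_iff.mp (Finset.mem_range.mp hk); omega
      rw [this]
    rw [Finset.sum_congr rfl hb, ← Finset.sum_biUnion, ← Finset.sum_product']
    · apply (Finset.sum_subset _ _).symm
      · intro p hp
        simp only [Finset.mem_biUnion, Finset.mem_range, Finset.HasAntidiagonal.mem_antidiagonal] at hp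
        obtain ⟨s, hs, hps⟩ := hp
        simp only [Finset.mem_product, Finset.mem_range]
        omega
      · intro p hp hp'
        have hpn : n < p.1 + p.2 := by
          by_contra h
          push_neg at h
          exact hp' (Finset.mem_biUnion.mpr ⟨p.1 + p.2, Finset.mem_range.mpr (by omega),
            Finset.HasAntidiagonal.mem_antidiagonal.mpr rfl⟩)
        rw [coeff_pow_zero hf (p.1 + p.2) n hpn, mul_zero]
    · intro s _ t _ hst
      simp only [Function.onFun, Finset.disjoint_left]
      intro p hp hq
      exact hst ((Finset.HasAntidiagonal.mem_antidiagonal.mp hp).symm.trans (Finset.HasAntidiagonal.mem_antidiagonal.mp hq))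
  rw [htri]
  -- now use Cauchy/Vandermonde
  rw [degExpComp, psComp, PowerSeries.coeff_mk]
  apply Finset.sum_congr rfl
  intro s _
  rw [← Finset.sum_mul]
  congr 1
  rw [← dfall_cauchy]

lemma constCoeff_degExpSub' (l : ℝ) : constantCoeff (degExp l 1 - 1) = 0 := by
  simp [degExp, dfall]

theorem stmt1' (l : ℝ) (x y : ℝ) (n : ℕ) :
    dBell l n (x + y) = ∑ j ∈ range (n + 1), n.choose j * dBell l j x * dBell l (n - j) y := by
  rw [dBell_eq, degExpComp_mul l x y (constCoeff_degExpSub' l) n, PowerSeries.coeff_mul,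
    Finset.Nat.sum_antidiagonal_eq_sum_range_succ_mk, Finset.mul_sum]
  apply Finset.sum_congr rfl
  intro j hj
  have hjn : j ≤ n := Nat.lt_succ_iff.mp (Finset.mem_range.mp hj)
  rw [dBell_eq, dBell_eq]
  have h := Nat.choose_mul_factorial_mul_factorial hjn
  have h' : (n.choose j : ℝ) * j ! * (n - j)! = n ! := by exact_mod_cast congrArg (Nat.cast : ℕ → ℝ) h
  set c := PowerSeries.coeff j (degExpComp l x (degExp l 1 - 1))
  set d := PowerSeries.coeff (n - j) (degExpComp l y (degExp l 1 - 1))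
  linear_combination (-(c * d)) * h'

theorem stmt1 (l : ℝ) (hl : l ≠ 0) (x y : ℝ) (n : ℕ) :
    dBell l n (x + y) = ∑ j ∈ range (n + 1), n.choose j * dBell l j x * dBell l (n - j) y := stmt1' l x y n

end
end

section
/- (Dobinski-like formula) Let λ be a real number with 0 < λ < 1/2 and let x be a real number. Then for every n ≥ 0, the infinite series Σ_{k=0}^{∞} ((k)_{n,λ}/k!) (1/(1−λ))^k (x)_{k,λ} converges and φ_{n,λ}(x) = (1−λ)^{x/λ} · Σ_{k=0}^{∞} ((k)_{n,λ}/k!) (1/(1−λ))^k (x)_{k,λ}, where (1−λ)^{x/λ} = e_λ^x(−1) denotes the real power. -/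
set_option maxHeartbeats 1000000


open Nat PowerSeries Finset

noncomputable section

lemma dfall_add_s2 (l x : ℝ) (k m : ℕ) :
    dfall l x (k + m) = dfall l x k * dfall l (x - k * l) m := by
  induction m with
  | zero => simp [dfall_zero]
  | succ m ih =>
      rw [← add_assoc, dfall_succ, ih, dfall_succ, mul_assoc]
      push_cast
      ring_nf

lemma dfall_scale {l : ℝ} (hl : l ≠ 0) (x : ℝ) (m : ℕ) :
    dfall l x m = l ^ m * dfall 1 (x / l) m := by
  unfold dfall
  rw [Finset.pow_eq_prod_const, ← Finset.prod_mul_distrib]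
  refine Finset.prod_congr rfl fun i _ => ?_
  field_simp

lemma dfall_one_eq_smeval (y : ℝ) (m : ℕ) :
    dfall 1 y m = (descPochhammer ℤ m).smeval y := by
  induction m with
  | zero => simp [dfall_zero]
  | succ m ih =>
      rw [dfall_succ, ih, descPochhammer_succ_right, Polynomial.smeval_mul,
        Polynomial.smeval_sub, Polynomial.smeval_X, Polynomial.smeval_natCast]
      simp

lemma dfall_one_vandermonde (a b : ℝ) (k : ℕ) :
    dfall 1 (a + b) k
      = ∑ ij ∈ antidiagonal k, (k.choose ij.1 : ℝ) * (dfall 1 a ij.1 * dfall 1 b ij.2) := by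
  rw [dfall_one_eq_smeval, Ring.descPochhammer_smeval_add k (Commute.all a b)]
  refine Finset.sum_congr rfl fun ij _ => by rw [dfall_one_eq_smeval, dfall_one_eq_smeval]

lemma dfall_vandermonde {l : ℝ} (hl : l ≠ 0) (a b : ℝ) (k : ℕ) :
    dfall l (a + b) k
      = ∑ ij ∈ antidiagonal k, (k.choose ij.1 : ℝ) * (dfall l a ij.1 * dfall l b ij.2) := by
  rw [dfall_scale hl, show (a+b)/l = a/l + b/l by ring, dfall_one_vandermonde]
  rw [Finset.mul_sum]
  refine Finset.sum_congr rfl fun ij hij => ?_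
  rw [dfall_scale hl a, dfall_scale hl b]
  have : ij.1 + ij.2 = k := by simpa using Finset.HasAntidiagonal.mem_antidiagonal.mp hij
  rw [← this, pow_add]
  ring


lemma coeff_degExp (l x : ℝ) (n : ℕ) :
    PowerSeries.coeff n (degExp l x) = dfall l x n / n ! := by
  rw [degExp, PowerSeries.coeff_mk]

lemma degExp_zero (l : ℝ) : degExp l 0 = 1 := by
  ext n
  rw [coeff_degExp]
  cases n with
  | zero => simp [dfall_zero]
  | succ n =>
      have : dfall l 0 (n+1) = 0 :=
        Finset.prod_eq_zero (Finset.mem_range.mpr (Nat.succ_pos n)) (by simp)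
      simp [this, PowerSeries.coeff_one]

lemma degExp_mul {l : ℝ} (hl : l ≠ 0) (a b : ℝ) :
    degExp l a * degExp l b = degExp l (a + b) := by
  ext m
  rw [PowerSeries.coeff_mul, coeff_degExp, dfall_vandermonde hl, Finset.sum_div]
  refine Finset.sum_congr rfl fun ij hij => ?_
  have h : ij.1 + ij.2 = m := Finset.HasAntidiagonal.mem_antidiagonal.mp hij
  have h1 : ij.1 ≤ m := by omega
  rw [coeff_degExp, coeff_degExp, Nat.cast_choose ℝ h1, show m - ij.1 = ij.2 by omega]
  have f1 : (ij.1 ! : ℝ) ≠ 0 := Nat.cast_ne_zero.mpr (Nat.factorial_ne_zero _)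
  have f2 : (ij.2 ! : ℝ) ≠ 0 := Nat.cast_ne_zero.mpr (Nat.factorial_ne_zero _)
  have f3 : (m ! : ℝ) ≠ 0 := Nat.cast_ne_zero.mpr (Nat.factorial_ne_zero _)
  field_simp

lemma degExp_pow {l : ℝ} (hl : l ≠ 0) (j : ℕ) : degExp l 1 ^ j = degExp l j := by
  induction j with
  | zero => simpa using (degExp_zero l).symm
  | succ j ih =>
      rw [pow_succ, ih, degExp_mul hl]
      norm_num

lemma coeff_sub_one_pow {l : ℝ} (hl : l ≠ 0) (n N : ℕ) :
    PowerSeries.coeff n ((degExp l 1 - 1) ^ N)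
      = ∑ j ∈ range (N + 1), (-1 : ℝ) ^ (N - j) * (N.choose j : ℝ) * (dfall l j n / n !) := by
  rw [sub_pow, map_sum]
  refine Finset.sum_congr rfl fun j hj => ?_
  have hj' : j ≤ N := Nat.lt_succ_iff.mp (Finset.mem_range.mp hj)
  have e1 : ((-1 : PowerSeries ℝ)) ^ (j + N) * degExp l 1 ^ j * 1 ^ (N - j)
      * ((N.choose j : ℕ) : PowerSeries ℝ)
      = PowerSeries.C ((-1 : ℝ) ^ (j + N) * (N.choose j : ℝ)) * degExp l j := by
    rw [degExp_pow hl, one_pow, mul_one, map_mul, map_pow, map_neg, map_one,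
      map_natCast (PowerSeries.C (R := ℝ))]
    ring
  rw [e1, PowerSeries.coeff_C_mul, coeff_degExp]
  have e2 : (-1 : ℝ) ^ (j + N) = (-1) ^ (N - j) := by
    rw [show j + N = N - j + 2 * j by omega, pow_add, pow_mul, neg_one_sq, one_pow, mul_one]
  rw [e2]

lemma dS2_mul_factorial {l : ℝ} (hl : l ≠ 0) (n N : ℕ) :
    (N ! : ℝ) * dS2 l n N
      = ∑ j ∈ range (N + 1), (-1 : ℝ) ^ (N - j) * (N.choose j : ℝ) * dfall l j n := by
  have fN : (N ! : ℝ) ≠ 0 := Nat.cast_ne_zero.mpr (Nat.factorial_ne_zero _)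
  have fn : (n ! : ℝ) ≠ 0 := Nat.cast_ne_zero.mpr (Nat.factorial_ne_zero _)
  rw [dS2, coeff_sub_one_pow hl, ← mul_assoc, mul_comm (N ! : ℝ) _, div_mul_cancel₀ _ fN,
    Finset.mul_sum]
  refine Finset.sum_congr rfl fun j hj => ?_
  field_simp

lemma dS2_eq_zero {l : ℝ} (n N : ℕ) (h : n < N) : dS2 l n N = 0 := by
  have h0 : PowerSeries.constantCoeff (degExp l 1 - 1) = 0 := by
    simp [degExp, dfall_zero]
  obtain ⟨g, hg⟩ := pow_dvd_pow_of_dvd (PowerSeries.X_dvd_iff.mpr h0) N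
  rw [dS2, hg, PowerSeries.coeff_mul]
  rw [Finset.sum_eq_zero fun p hp => ?_]
  · ring
  · have : p.1 ≤ n := by have := Finset.HasAntidiagonal.mem_antidiagonal.mp hp; omega
    rw [PowerSeries.coeff_X_pow, if_neg (by omega), zero_mul]


lemma choose_le_two_pow (n k : ℕ) : n.choose k ≤ 2 ^ n := by
  rcases le_or_gt k n with h | h
  · calc n.choose k ≤ ∑ i ∈ range (n+1), n.choose i :=
        Finset.single_le_sum (fun i _ => Nat.zero_le _) (Finset.mem_range.mpr (by omega))
      _ = 2 ^ n := Nat.sum_range_choose n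
  · rw [Nat.choose_eq_zero_of_lt h]; positivity

lemma prod_range_add_cast (M m : ℕ) :
    ∏ i ∈ range m, ((M : ℝ) + 1 + i) = ((M + m).choose M : ℝ) * m ! := by
  induction m with
  | zero => simp
  | succ m ih =>
      rw [Finset.prod_range_succ, ih]
      have e1' : M + (m+1) - M = m + 1 := by omega
      have e2' : M + m - M = m := by omega
      have h1 : ((M + (m+1)).choose M : ℝ) = ((M+(m+1))! : ℝ) / ((M ! : ℝ) * ((m+1)! : ℝ)) := by
        rw [Nat.cast_choose ℝ (by omega : M ≤ M + (m+1)), e1']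
      have h2 : ((M + m).choose M : ℝ) = ((M+m)! : ℝ) / ((M ! : ℝ) * ((m)! : ℝ)) := by
        rw [Nat.cast_choose ℝ (by omega : M ≤ M + m), e2']
      rw [h1, h2]
      have e1 : ((M+(m+1))! : ℝ) = ((M+m)! : ℝ) * (M + m + 1) := by
        rw [show M + (m+1) = (M+m) + 1 by ring, Nat.factorial_succ]; push_cast; ring
      have e2 : (((m+1))! : ℝ) = ((m)! : ℝ) * (m+1) := by
        rw [Nat.factorial_succ]; push_cast; ring
      rw [e1, e2]
      have f1 : (M ! : ℝ) ≠ 0 := Nat.cast_ne_zero.mpr (Nat.factorial_ne_zero _)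
      have f2 : ((m)! : ℝ) ≠ 0 := Nat.cast_ne_zero.mpr (Nat.factorial_ne_zero _)
      have f3 : (0:ℝ) < (m:ℝ) + 1 := by positivity
      field_simp
      ring

lemma abs_dfall_one_le {y : ℝ} {M : ℕ} (h : |y| ≤ M) (m : ℕ) :
    |dfall 1 y m| ≤ ((M + m).choose M : ℝ) * m ! := by
  rw [← prod_range_add_cast, dfall, Finset.abs_prod]
  refine Finset.prod_le_prod (fun i _ => abs_nonneg _) (fun i hi => ?_)
  have : |y - i * 1| ≤ |y| + i := by
    calc |y - i * 1| ≤ |y| + |(i:ℝ) * 1| := abs_sub _ _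
    _ = |y| + i := by simp
  have hi' : (0:ℝ) ≤ i := by positivity
  calc |y - i * 1| ≤ |y| + i := this
    _ ≤ (M:ℝ) + 1 + i := by linarith

lemma abs_dfall_div_le {l : ℝ} (hl : 0 < l) {x : ℝ} {M : ℕ} (h : |x| ≤ M * l) (m : ℕ) :
    |dfall l x m| / m ! ≤ ((M + m).choose M : ℝ) * l ^ m := by
  rw [dfall_scale (ne_of_gt hl)]
  have hy : |x / l| ≤ M := by
    rw [abs_div, abs_of_pos hl, div_le_iff₀ hl]
    exact h
  have hb := abs_dfall_one_le hy m
  have fm : (0:ℝ) < (m ! : ℝ) := by positivity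
  rw [abs_mul, abs_pow, abs_of_pos hl, div_le_iff₀ fm]
  calc l ^ m * |dfall 1 (x/l) m| ≤ l ^ m * (((M + m).choose M : ℝ) * m !) := by
        apply mul_le_mul_of_nonneg_left hb (by positivity)
    _ = ((M + m).choose M : ℝ) * l ^ m * m ! := by ring

lemma choose_le_poly (M k : ℕ) : ((M + k).choose M : ℝ) ≤ ((M:ℝ)+1)^M * ((k:ℝ)+1)^M := by
  have h1 : (M + k).choose M ≤ (M + k) ^ M := Nat.choose_le_pow (M+k) M
  have h2 : ((M + k : ℕ) : ℝ) ≤ ((M:ℝ)+1) * ((k:ℝ)+1) := by push_cast; nlinarith [Nat.cast_nonneg (α := ℝ) M, Nat.cast_nonneg (α := ℝ) k]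
  calc ((M + k).choose M : ℝ) ≤ ((M + k : ℕ) : ℝ) ^ M := by exact_mod_cast h1
    _ ≤ (((M:ℝ)+1) * ((k:ℝ)+1)) ^ M := by
        apply pow_le_pow_left₀ (by positivity) h2 M
    _ = ((M:ℝ)+1)^M * ((k:ℝ)+1)^M := mul_pow _ _ _

lemma summable_poly_geom {c : ℝ} (h0 : 0 < c) (h1 : c < 1) (q : ℕ) :
    Summable (fun k : ℕ => ((k:ℝ)+1)^q * c^k) := by
  have hs : Summable (fun k : ℕ => (k:ℝ)^q * c^k) := by
    have : ‖c‖ < 1 := by rw [Real.norm_eq_abs, abs_of_pos h0]; exact h1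
    exact summable_pow_mul_geometric_of_norm_lt_one q this
  have hshift : Summable ((fun k : ℕ => (k:ℝ)^q * c^k) ∘ (· + 1)) :=
    hs.comp_injective (add_left_injective 1)
  have := hshift.mul_left (1/c)
  refine this.congr fun k => ?_
  simp only [Function.comp]
  push_cast
  field_simp
  ring


section Binomial
variable {t : ℝ} (ht : |t| < 1)

/-- the binomial series function -/
def B (t a : ℝ) : ℝ := ∑' m : ℕ, dfall 1 a m / m ! * t ^ m

lemma bin_norm_le {a : ℝ} {M : ℕ} (h : |a| ≤ M) (m : ℕ) :
    ‖dfall 1 a m / m ! * t ^ m‖ ≤ ((M + m).choose M : ℝ) * |t| ^ m := by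
  have fm : (0:ℝ) < (m ! : ℝ) := by positivity
  rw [Real.norm_eq_abs, abs_mul, abs_div, abs_pow, Nat.abs_cast]
  have h1 : |dfall 1 a m| / (m ! : ℝ) ≤ ((M + m).choose M : ℝ) := by
    rw [div_le_iff₀ fm]; exact abs_dfall_one_le h m
  exact mul_le_mul_of_nonneg_right h1 (by positivity)

include ht in
lemma bin_summable_bound (M : ℕ) :
    Summable (fun m : ℕ => ((M + m).choose M : ℝ) * |t| ^ m) := by
  have := summable_choose_mul_geometric_of_norm_lt_one (R := ℝ) M
    (r := |t|) (by rwa [Real.norm_eq_abs, abs_abs])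
  exact this.congr fun m => by rw [Nat.add_comm m M]

include ht in
lemma bin_summable_norm (a : ℝ) :
    Summable (fun m : ℕ => ‖dfall 1 a m / m ! * t ^ m‖) := by
  obtain ⟨M, hM⟩ := exists_nat_ge |a|
  exact (bin_summable_bound ht M).of_nonneg_of_le (fun m => norm_nonneg _)
    (fun m => bin_norm_le hM m)

include ht in
lemma bin_summable (a : ℝ) : Summable (fun m : ℕ => dfall 1 a m / m ! * t ^ m) :=
  (bin_summable_norm ht a).of_norm

include ht in
lemma B_mul (a b : ℝ) : B t a * B t b = B t (a + b) := by
  rw [B, B, B, tsum_mul_tsum_eq_tsum_sum_antidiagonal_of_summable_norm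
    (bin_summable_norm ht a) (bin_summable_norm ht b)]
  congr 1
  funext n
  rw [dfall_one_vandermonde, Finset.sum_div, Finset.sum_mul]
  refine Finset.sum_congr rfl fun ij hij => ?_
  have h : ij.1 + ij.2 = n := Finset.HasAntidiagonal.mem_antidiagonal.mp hij
  rw [Nat.cast_choose ℝ (by omega : ij.1 ≤ n), show n - ij.1 = ij.2 by omega, ← h, pow_add]
  have f1 : (ij.1 ! : ℝ) ≠ 0 := Nat.cast_ne_zero.mpr (Nat.factorial_ne_zero _)
  have f2 : (ij.2 ! : ℝ) ≠ 0 := Nat.cast_ne_zero.mpr (Nat.factorial_ne_zero _)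
  have f3 : ((ij.1 + ij.2) ! : ℝ) ≠ 0 := Nat.cast_ne_zero.mpr (Nat.factorial_ne_zero _)
  field_simp

lemma B_one : B t 1 = 1 + t := by
  rw [B, tsum_eq_sum (s := range 2) ?_]
  · rw [Finset.sum_range_succ, Finset.sum_range_one]
    rw [dfall_zero, dfall_succ, dfall_zero]
    norm_num
  · intro m hm
    have hm2 : 2 ≤ m := by simp at hm; omega
    have : dfall 1 1 m = 0 := by
      obtain ⟨j, rfl⟩ : ∃ j, m = j + 2 := ⟨m - 2, by omega⟩
      have : (1:ℝ) - (1:ℕ) * 1 = 0 := by norm_num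
      exact Finset.prod_eq_zero (Finset.mem_range.mpr (by omega : (1:ℕ) < j + 2)) (by norm_num)
    rw [this]
    simp

lemma B_zero : B t 0 = 1 := by
  rw [B, tsum_eq_sum (s := range 1) ?_]
  · simp [dfall_zero]
  · intro m hm
    have hm1 : 1 ≤ m := by simp at hm; omega
    have : dfall 1 0 m = 0 :=
      Finset.prod_eq_zero (Finset.mem_range.mpr (by omega : 0 < m)) (by norm_num)
    rw [this]; simp

include ht in
lemma B_pos (a : ℝ) : 0 < B t a := by
  have hne : B t a ≠ 0 := by
    intro h
    have := B_mul ht a (-a)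
    rw [h, zero_mul, add_neg_cancel, B_zero] at this
    exact zero_ne_one this
  have hsq : B t a = B t (a/2) * B t (a/2) := by
    rw [B_mul ht]; norm_num
  have : 0 ≤ B t a := hsq ▸ mul_self_nonneg _
  exact lt_of_le_of_ne this (Ne.symm hne)

include ht in
lemma B_nat (n : ℕ) : B t (n : ℝ) = (1 + t) ^ n := by
  induction n with
  | zero => simpa using B_zero
  | succ n ih =>
      have := B_mul ht (n : ℝ) 1
      rw [ih, B_one] at this
      push_cast
      rw [← this, pow_succ]

include ht in
lemma B_int (p : ℤ) : B t (p : ℝ) = (1 + t) ^ p := by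
  have h1t : (0:ℝ) < 1 + t := by
    have := abs_lt.mp ht; linarith
  rcases p with n | n
  · rw [show ((Int.ofNat n : ℤ) : ℝ) = (n:ℝ) by push_cast; rfl, B_nat ht,
      show (Int.ofNat n : ℤ) = (n:ℤ) from rfl, zpow_natCast]
  · have key := B_mul ht ((n+1 : ℕ) : ℝ) ((Int.negSucc n : ℤ) : ℝ)
    have : ((n+1 : ℕ) : ℝ) + ((Int.negSucc n : ℤ) : ℝ) = 0 := by
      push_cast [Int.negSucc_eq]; ring
    rw [this, B_zero, B_nat ht] at key
    have hp : (1 + t) ^ (n+1 : ℕ) ≠ 0 := by positivity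
    have : B t ((Int.negSucc n : ℤ) : ℝ) = ((1 + t) ^ (n+1 : ℕ))⁻¹ := by
      field_simp at key ⊢
      linarith [key]
    rw [this, Int.negSucc_eq, zpow_neg]
    congr 1

include ht in
lemma B_pow (n : ℕ) (a : ℝ) : B t a ^ n = B t (n * a) := by
  induction n with
  | zero => simpa using B_zero.symm
  | succ n ih =>
      rw [pow_succ, ih, B_mul ht]
      congr 1
      push_cast; ring

include ht in
lemma B_rat (q : ℚ) : B t (q : ℝ) = (1 + t) ^ (q : ℝ) := by
  have h1t : (0:ℝ) < 1 + t := by have := abs_lt.mp ht; linarith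
  have hd0 : q.den ≠ 0 := q.den_nz
  have harg : (q.den : ℝ) * (q : ℝ) = (q.num : ℝ) := by
    rw [Rat.cast_def]
    field_simp
  have key : B t (q : ℝ) ^ q.den = ((1 + t) ^ (q : ℝ)) ^ q.den := by
    rw [B_pow ht, harg]
    rw [show (q.num : ℝ) = ((q.num : ℤ) : ℝ) by push_cast; rfl, B_int ht]
    rw [← Real.rpow_natCast ((1 + t) ^ (q:ℝ)) q.den, ← Real.rpow_mul (le_of_lt h1t),
      mul_comm (q:ℝ), harg, ← Real.rpow_intCast]
  have h1 : (0:ℝ) ≤ B t (q : ℝ) := le_of_lt (B_pos ht _)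
  have h2 : (0:ℝ) ≤ (1 + t) ^ (q : ℝ) := Real.rpow_nonneg (le_of_lt h1t) _
  have hdR : ((q.den : ℕ) : ℝ) ≠ 0 := Nat.cast_ne_zero.mpr hd0
  have e1 : B t (q:ℝ) = (B t (q:ℝ) ^ q.den) ^ ((q.den : ℝ)⁻¹) := by
    rw [← Real.rpow_natCast (B t (q:ℝ)) q.den, ← Real.rpow_mul h1, mul_inv_cancel₀ hdR,
      Real.rpow_one]
  rw [e1, key, ← Real.rpow_natCast ((1 + t) ^ (q:ℝ)) q.den, ← Real.rpow_mul h2,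
    mul_inv_cancel₀ hdR, Real.rpow_one]

include ht in
lemma B_continuous : Continuous (B t) := by
  rw [continuous_iff_continuousAt]
  intro a
  obtain ⟨M, hM⟩ := exists_nat_gt |a|
  have hcont : ContinuousOn (B t) (Metric.ball (0:ℝ) M) := by
    apply TendstoUniformlyOn.continuousOn
      (tendstoUniformlyOn_tsum (bin_summable_bound ht M) ?_)
    · refine Filter.Frequently.of_forall fun s => ?_
      apply continuousOn_finset_sum
      intro m _
      apply ContinuousOn.mul ?_ continuousOn_const
      apply ContinuousOn.div_const
      apply continuousOn_finset_prod
      intro i _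
      exact (continuousOn_id.sub continuousOn_const)
    · intro m y hy
      apply bin_norm_le
      have : |y| < M := by simpa [Real.dist_eq] using Metric.mem_ball.mp hy
      exact le_of_lt this
  have hmem : a ∈ Metric.ball (0:ℝ) M := by
    simpa [Metric.mem_ball, Real.dist_eq] using hM
  exact hcont.continuousAt (Metric.isOpen_ball.mem_nhds hmem)

include ht in
lemma B_eq_rpow (a : ℝ) : B t a = (1 + t) ^ a := by
  have h1t : (0:ℝ) < 1 + t := by have := abs_lt.mp ht; linarith
  have hc2 : Continuous (fun a : ℝ => (1 + t) ^ a) := by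
    have : (fun a : ℝ => (1 + t) ^ a) = fun a => Real.exp (Real.log (1 + t) * a) := by
      funext a
      rw [Real.rpow_def_of_pos h1t]
    rw [this]
    exact Real.continuous_exp.comp (continuous_const.mul continuous_id)
  have hdense : Dense (Set.range ((↑) : ℚ → ℝ)) := Rat.denseRange_cast
  have heq : (B t) = fun a : ℝ => (1 + t) ^ a := by
    apply Continuous.ext_on hdense (B_continuous ht) hc2
    rintro _ ⟨q, rfl⟩
    exact B_rat ht q
  exact congrFun heq a

include ht in
lemma binomial_hasSum (a : ℝ) :
    HasSum (fun m : ℕ => dfall 1 a m / m ! * t ^ m) ((1 + t) ^ a) := by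
  rw [← B_eq_rpow ht a]
  exact (bin_summable ht a).hasSum

end Binomial


lemma abs_dfall_nat_le {l : ℝ} (h0 : 0 ≤ l) (h1 : l ≤ 1) (k n : ℕ) :
    |dfall l (k:ℝ) n| ≤ (((n:ℝ)+1) * ((k:ℝ)+1)) ^ n := by
  rw [dfall, Finset.abs_prod]
  have hstep : ∀ i ∈ range n, |(k:ℝ) - i * l| ≤ ((n:ℝ)+1) * ((k:ℝ)+1) := by
    intro i hi
    have hi' : (i:ℝ) ≤ (n:ℝ) := by
      have := Finset.mem_range.mp hi; exact_mod_cast le_of_lt this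
    have hil : (0:ℝ) ≤ (i:ℝ) * l := by positivity
    have hil2 : (i:ℝ) * l ≤ (n:ℝ) := by nlinarith [Nat.cast_nonneg (α := ℝ) i]
    have habs : |(k:ℝ) - i * l| ≤ (k:ℝ) + (i:ℝ) * l := by
      rw [abs_sub_le_iff]
      constructor <;> nlinarith [Nat.cast_nonneg (α := ℝ) k]
    nlinarith [Nat.cast_nonneg (α := ℝ) k, Nat.cast_nonneg (α := ℝ) n]
  calc ∏ i ∈ range n, |(k:ℝ) - i * l|
      ≤ ∏ _i ∈ range n, (((n:ℝ)+1) * ((k:ℝ)+1)) :=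
        Finset.prod_le_prod (fun i _ => abs_nonneg _) hstep
    _ = (((n:ℝ)+1) * ((k:ℝ)+1)) ^ n := by rw [Finset.prod_const, Finset.card_range]

theorem stmt2 (l : ℝ) (h0 : 0 < l) (h1 : l < 1 / 2) (x : ℝ) (n : ℕ) :
    Summable (fun k : ℕ => dfall l (k : ℝ) n / k ! * (1 / (1 - l)) ^ k * dfall l x k) ∧
      dBell l n x =
        (1 - l) ^ (x / l) *
          ∑' k : ℕ, dfall l (k : ℝ) n / k ! * (1 / (1 - l)) ^ k * dfall l x k := by
  have h1l : (0:ℝ) < 1 - l := by linarith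
  have hlne : l ≠ 0 := ne_of_gt h0
  have hrho : l / (1 - l) < 1 := by rw [div_lt_one h1l]; linarith
  have hrho0 : 0 < l / (1 - l) := by positivity
  have h2l : 2 * l < 1 := by linarith
  set M : ℕ := ⌈|x| / l⌉₊ with hM
  have hxM : |x| ≤ M * l := by
    rw [← div_le_iff₀ h0]
    exact Nat.le_ceil _
  set a : ℕ → ℝ := fun k => dfall l (k : ℝ) n / k ! * (1 / (1 - l)) ^ k * dfall l x k with ha
  -- bound for a
  have habound : ∀ k : ℕ, ‖a k‖ ≤
      (((n:ℝ)+1)^n * (((M:ℝ)+1)^M)) * (((k:ℝ)+1)^(n+M) * (l/(1-l))^k) := by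
    intro k
    have fk : (0:ℝ) < (k ! : ℝ) := by positivity
    have e1 : ‖a k‖ = |dfall l (k:ℝ) n| * (1/(1-l))^k * (|dfall l x k| / k !) := by
      rw [ha, Real.norm_eq_abs, abs_mul, abs_mul, abs_div, abs_pow, Nat.abs_cast,
        abs_of_pos (by positivity : (0:ℝ) < 1/(1-l))]
      ring
    rw [e1]
    have b1 : |dfall l (k:ℝ) n| ≤ (((n:ℝ)+1) * ((k:ℝ)+1)) ^ n :=
      abs_dfall_nat_le (le_of_lt h0) (by linarith) k n
    have b2 : |dfall l x k| / k ! ≤ (((M:ℝ)+1)^M * ((k:ℝ)+1)^M) * l ^ k :=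
      le_trans (abs_dfall_div_le h0 hxM k)
        (mul_le_mul_of_nonneg_right (choose_le_poly M k) (by positivity))
    calc |dfall l (k:ℝ) n| * (1/(1-l))^k * (|dfall l x k| / k !)
        ≤ ((((n:ℝ)+1) * ((k:ℝ)+1)) ^ n) * (1/(1-l))^k * ((((M:ℝ)+1)^M * ((k:ℝ)+1)^M) * l ^ k) := by
          apply mul_le_mul (mul_le_mul_of_nonneg_right b1 (by positivity)) b2
            (by positivity) (by positivity)
      _ = (((n:ℝ)+1)^n * (((M:ℝ)+1)^M)) * (((k:ℝ)+1)^(n+M) * (l/(1-l))^k) := by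
          rw [mul_pow, pow_add, div_pow, div_pow]
          field_simp
          ring
  have hgsum : Summable (fun k : ℕ =>
      (((n:ℝ)+1)^n * (((M:ℝ)+1)^M)) * (((k:ℝ)+1)^(n+M) * (l/(1-l))^k)) :=
    (summable_poly_geom hrho0 hrho (n+M)).mul_left _
  have hsummable : Summable a := hgsum.of_norm_bounded habound
  refine ⟨hsummable, ?_⟩
  -- the double-indexed family
  set F : ℕ × ℕ → ℝ := fun p =>
    dfall l (p.1 : ℝ) n / p.1 ! * dfall l x (p.1 + p.2) * (-1) ^ p.2 / p.2 ! with hF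
  -- inner sums
  have hinner : ∀ k : ℕ, HasSum (fun m => F (k, m)) ((1 - l) ^ (x / l) * a k) := by
    intro k
    have hb := (binomial_hasSum (t := -l)
      (by rw [abs_neg, abs_of_pos h0]; linarith) (x / l - k)).mul_left
      (dfall l (k:ℝ) n / k ! * dfall l x k)
    have hfun : ∀ m : ℕ, F (k, m) =
        dfall l (k:ℝ) n / k ! * dfall l x k * (dfall 1 (x / l - k) m / m ! * (-l) ^ m) := by
      intro m
      have es : dfall 1 (x / l - k) m = dfall l (x - k * l) m / l ^ m := by
        rw [dfall_scale hlne (x - k * l) m]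
        field_simp [show (x - k*l)/l = x/l - k by field_simp]
      rw [hF]
      simp only
      rw [dfall_add_s2 l x k m, es]
      have hnl : (-l : ℝ) ^ m = (-1) ^ m * l ^ m := neg_pow l m
      rw [hnl]
      have hlm : (l:ℝ) ^ m ≠ 0 := by positivity
      field_simp
    have hval : dfall l (k:ℝ) n / k ! * dfall l x k * ((1 + -l) ^ (x / l - (k:ℝ)))
        = (1 - l) ^ (x / l) * a k := by
      rw [show (1:ℝ) + -l = 1 - l by ring]
      have e2 : (1 - l) ^ (x / l - (k:ℝ)) = (1 - l) ^ (x / l) * (1 / (1 - l)) ^ k := by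
        rw [show x / l - (k:ℝ) = x / l + (-(k:ℝ)) by ring, Real.rpow_add h1l,
          Real.rpow_neg (le_of_lt h1l), Real.rpow_natCast, one_div, inv_pow]
      rw [e2, ha]
      ring
    rw [← hval]
    exact hb.congr_fun fun m => hfun m
  -- summability of F
  set fB : ℕ → ℝ := fun k =>
    ((n:ℝ)+1)^n * ((M:ℝ)+1)^M * ((k:ℝ)+1)^(n+M) * (2*l)^k with hfB
  set gB : ℕ → ℝ := fun m => ((m:ℝ)+1)^M * (2*l)^m with hgB
  have hFnorm : ∀ p : ℕ × ℕ, ‖F p‖ ≤ fB p.1 * gB p.2 := by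
    rintro ⟨k, m⟩
    have fk : (0:ℝ) < (k ! : ℝ) := by positivity
    have fm : (0:ℝ) < (m ! : ℝ) := by positivity
    have fkm : (0:ℝ) < ((k+m) ! : ℝ) := by positivity
    have e1 : ‖F (k, m)‖ = |dfall l (k:ℝ) n| / k ! * (|dfall l x (k+m)| / m !) := by
      rw [hF, Real.norm_eq_abs]
      simp only
      rw [abs_div, abs_mul, abs_mul, abs_div, abs_pow, abs_neg, abs_one, one_pow,
        Nat.abs_cast, Nat.abs_cast]
      ring
    rw [e1]
    have key : |dfall l x (k+m)| / k ! / m !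
        ≤ (((M:ℝ)+1)^M * ((k:ℝ)+1)^M * ((m:ℝ)+1)^M) * ((2*l)^(k+m)) := by
      have b1 : |dfall l x (k+m)| / (k+m)! ≤ ((M + (k+m)).choose M : ℝ) * l ^ (k+m) :=
        abs_dfall_div_le h0 hxM (k+m)
      have bc : (((k+m).choose k : ℕ) : ℝ) ≤ (2:ℝ) ^ (k+m) := by
        exact_mod_cast _root_.choose_le_two_pow (k+m) k
      have efrac : ((k+m)! : ℝ) = ((k+m).choose k : ℝ) * (k ! * m !) := by
        rw [Nat.cast_choose ℝ (by omega : k ≤ k + m), show k + m - k = m by omega]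
        field_simp
      have hc0 : 0 < (k+m).choose k := Nat.choose_pos (by omega)
      have hcne : (((k+m).choose k : ℕ) : ℝ) ≠ 0 := by exact_mod_cast hc0.ne'
      have e2 : |dfall l x (k+m)| / k ! / m !
          = (|dfall l x (k+m)| / (k+m)!) * ((k+m).choose k : ℝ) := by
        rw [efrac]
        field_simp
      rw [e2]
      have bchoose : ((M + (k+m)).choose M : ℝ) ≤ ((M:ℝ)+1)^M * ((k:ℝ)+1)^M * ((m:ℝ)+1)^M := by
        refine le_trans (choose_le_poly M (k+m)) ?_
        have hkm1 : (((k+m : ℕ)):ℝ)+1 ≤ ((k:ℝ)+1) * ((m:ℝ)+1) := by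
          push_cast
          nlinarith [Nat.cast_nonneg (α := ℝ) k, Nat.cast_nonneg (α := ℝ) m]
        have hp : ((((k+m : ℕ)):ℝ)+1)^M ≤ (((k:ℝ)+1) * ((m:ℝ)+1))^M :=
          pow_le_pow_left₀ (by positivity) hkm1 M
        calc ((M:ℝ)+1)^M * ((((k+m:ℕ)):ℝ)+1)^M
            ≤ ((M:ℝ)+1)^M * (((k:ℝ)+1) * ((m:ℝ)+1))^M := by
              apply mul_le_mul_of_nonneg_left hp (by positivity)
          _ = ((M:ℝ)+1)^M * ((k:ℝ)+1)^M * ((m:ℝ)+1)^M := by rw [mul_pow]; ring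
      calc (|dfall l x (k+m)| / (k+m)!) * ((k+m).choose k : ℝ)
          ≤ (((M + (k+m)).choose M : ℝ) * l ^ (k+m)) * ((2:ℝ)^(k+m)) := by
            apply mul_le_mul b1 bc (by positivity) (by positivity)
        _ ≤ ((((M:ℝ)+1)^M * ((k:ℝ)+1)^M * ((m:ℝ)+1)^M) * l ^ (k+m)) * ((2:ℝ)^(k+m)) := by
            apply mul_le_mul_of_nonneg_right
              (mul_le_mul_of_nonneg_right bchoose (by positivity)) (by positivity)
        _ = (((M:ℝ)+1)^M * ((k:ℝ)+1)^M * ((m:ℝ)+1)^M) * ((2*l)^(k+m)) := by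
            rw [mul_pow]
            ring
    have b0 : |dfall l (k:ℝ) n| ≤ (((n:ℝ)+1) * ((k:ℝ)+1)) ^ n :=
      abs_dfall_nat_le (le_of_lt h0) (by linarith) k n
    have e3 : |dfall l (k:ℝ) n| / k ! * (|dfall l x (k+m)| / m !)
        = |dfall l (k:ℝ) n| * (|dfall l x (k+m)| / k ! / m !) := by
      field_simp
    rw [e3]
    calc |dfall l (k:ℝ) n| * (|dfall l x (k+m)| / k ! / m !)
        ≤ ((((n:ℝ)+1) * ((k:ℝ)+1)) ^ n) *
            ((((M:ℝ)+1)^M * ((k:ℝ)+1)^M * ((m:ℝ)+1)^M) * ((2*l)^(k+m))) := by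
          apply mul_le_mul b0 key (by positivity) (by positivity)
      _ = fB k * gB m := by
          rw [hfB, hgB]
          simp only
          rw [mul_pow, pow_add ((k:ℝ)+1), pow_add (2*l)]
          ring
  have h2l0 : (0:ℝ) < 2 * l := by positivity
  have hfBsum : Summable fun k => ‖fB k‖ := by
    have hs := (summable_poly_geom h2l0 h2l (n+M)).mul_left (((n:ℝ)+1)^n * ((M:ℝ)+1)^M)
    have hs2 : Summable fB := hs.congr (fun k => by rw [hfB]; simp only; ring)
    exact hs2.abs.congr fun k => (Real.norm_eq_abs _).symm
  have hgBsum : Summable fun m => ‖gB m‖ := by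
    have hs2 : Summable gB := (summable_poly_geom h2l0 h2l M).congr (fun m => by rw [hgB])
    exact hs2.abs.congr fun m => (Real.norm_eq_abs _).symm
  have hFsummable : Summable F :=
    Summable.of_norm_bounded (summable_mul_of_summable_norm hfBsum hgBsum) hFnorm
  -- rearrangements
  have hinner_summable : ∀ k, Summable fun m => F (k, m) := fun k => (hinner k).summable
  have hs1 : ∑' (p : ℕ × ℕ), F p = ∑' k : ℕ, ((1 - l) ^ (x / l) * a k) := by
    rw [Summable.tsum_prod' hFsummable hinner_summable]
    exact tsum_congr fun k => (hinner k).tsum_eq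
  have hs2 : ∑' (p : ℕ × ℕ), F p = ∑' N : ℕ, ∑ kl ∈ antidiagonal N, F kl := by
    have hsig : Summable (fun q : (Σ N : ℕ, {p // p ∈ antidiagonal N}) =>
        F (Finset.HasAntidiagonal.sigmaAntidiagonalEquivProd q)) :=
      Finset.HasAntidiagonal.sigmaAntidiagonalEquivProd.summable_iff.mpr hFsummable
    calc ∑' (p : ℕ × ℕ), F p
        = ∑' q : (Σ N : ℕ, {p // p ∈ antidiagonal N}),
            F (Finset.HasAntidiagonal.sigmaAntidiagonalEquivProd q) :=
          (Finset.HasAntidiagonal.sigmaAntidiagonalEquivProd.tsum_eq F).symm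
      _ = ∑' (N : ℕ), ∑' (c : {p // p ∈ antidiagonal N}),
            F (Finset.HasAntidiagonal.sigmaAntidiagonalEquivProd ⟨N, c⟩) :=
          Summable.tsum_sigma' (fun N => (hasSum_fintype _).summable) hsig
      _ = ∑' N : ℕ, ∑ kl ∈ antidiagonal N, F kl := by
          refine tsum_congr fun N => ?_
          rw [tsum_fintype]
          exact Finset.sum_finset_coe _ _
  have hs3 : ∀ N : ℕ, ∑ kl ∈ antidiagonal N, F kl = dS2 l n N * dfall l x N := by
    intro N
    have fN : ((N)! : ℝ) ≠ 0 := Nat.cast_ne_zero.mpr (Nat.factorial_ne_zero _)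
    have := Finset.Nat.sum_antidiagonal_eq_sum_range_succ
      (fun k m => dfall l (k:ℝ) n / k ! * dfall l x (k + m) * (-1) ^ m / m !) N
    rw [hF]
    simp only
    rw [this]
    have hdS2 : dS2 l n N =
        (∑ j ∈ range (N + 1), (-1 : ℝ) ^ (N - j) * (N.choose j : ℝ) * dfall l j n) / N ! := by
      rw [← dS2_mul_factorial hlne]
      field_simp
    rw [hdS2, Finset.sum_div, Finset.sum_mul]
    refine Finset.sum_congr rfl fun k hk => ?_
    have hkN : k ≤ N := Nat.lt_succ_iff.mp (Finset.mem_range.mp hk)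
    have hadd : k + (N - k) = N := by omega
    rw [hadd, Nat.cast_choose ℝ hkN]
    have f1 : (k ! : ℝ) ≠ 0 := Nat.cast_ne_zero.mpr (Nat.factorial_ne_zero _)
    have f2 : ((N - k)! : ℝ) ≠ 0 := Nat.cast_ne_zero.mpr (Nat.factorial_ne_zero _)
    field_simp
  have hs4 : ∑' N : ℕ, (dS2 l n N * dfall l x N) = dBell l n x := by
    rw [tsum_eq_sum (s := range (n + 1)) ?_]
    · rfl
    · intro N hN
      have : n < N := by simpa using hN
      rw [dS2_eq_zero n N this, zero_mul]
  calc dBell l n x = ∑' N : ℕ, (dS2 l n N * dfall l x N) := hs4.symm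
    _ = ∑' N : ℕ, ∑ kl ∈ antidiagonal N, F kl := by
        exact tsum_congr fun N => (hs3 N).symm
    _ = ∑' (p : ℕ × ℕ), F p := hs2.symm
    _ = ∑' k : ℕ, ((1 - l) ^ (x / l) * a k) := hs1
    _ = (1 - l) ^ (x / l) * ∑' k : ℕ, a k := tsum_mul_left

end
end

section
/- For every nonzero real number λ, every positive integer m, and every real number x, the formal power series identity e_λ(t) · e_λ^x((e_λ^m(t)−1)/m) = Σ_{n≥0} d_{m,λ}(n,x) t^n/n! holds in ℝ[[t]]; that is, for every n ≥ 0 the coefficient of t^n/n! of the left-hand side equals Σ_{k=0}^{n} W_{m,λ}(n,k)(x)_{k,λ}. -/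
open Nat PowerSeries Finset

noncomputable section

theorem stmt3 (l : ℝ) (hl : l ≠ 0) (m : ℕ) (hm : 0 < m) (x : ℝ) (n : ℕ) :
    (n ! : ℝ) *
        PowerSeries.coeff n
          (degExp l 1 * degExpComp l x ((degExp l (m : ℝ) - 1) * PowerSeries.C (R := ℝ) (1 / m))) =
      dDowling m l n x := by
  set f := (degExp l (m : ℝ) - 1) * PowerSeries.C (R := ℝ) (1 / m) with hf
  have hf0 : PowerSeries.constantCoeff f = 0 := by
    simp [hf, degExp, dfall, ← PowerSeries.coeff_zero_eq_constantCoeff]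
  have hvan : ∀ j k : ℕ, j < k → PowerSeries.coeff j (f ^ k) = 0 := by
    intro j k hjk
    have hX : (PowerSeries.X : PowerSeries ℝ) ^ k ∣ f ^ k :=
      pow_dvd_pow_of_dvd (PowerSeries.X_dvd_iff.mpr hf0) k
    exact (PowerSeries.X_pow_dvd_iff.mp hX) j hjk
  rw [PowerSeries.coeff_mul]
  simp only [degExpComp, psComp, PowerSeries.coeff_mk]
  have hext : ∀ p ∈ Finset.HasAntidiagonal.antidiagonal n,
      (PowerSeries.coeff p.1) (degExp l 1) *
        ∑ k ∈ range (p.2 + 1), dfall l x k / k ! * PowerSeries.coeff p.2 (f ^ k)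
      = ∑ k ∈ range (n + 1), (PowerSeries.coeff p.1) (degExp l 1) *
          (dfall l x k / k ! * PowerSeries.coeff p.2 (f ^ k)) := by
    intro p hp
    rw [Finset.mul_sum]
    apply Finset.sum_subset
    · intro k hk
      simp only [mem_range] at hk ⊢
      have h2 : p.2 ≤ n := Finset.HasAntidiagonal.antidiagonal.snd_le hp
      omega
    · intro k _ hk2
      simp only [mem_range, not_lt] at hk2
      rw [hvan p.2 k (by omega), mul_zero, mul_zero]
  rw [Finset.sum_congr rfl hext]
  simp only [Finset.mul_sum]
  rw [Finset.sum_comm]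
  unfold dDowling dW
  apply Finset.sum_congr rfl
  intro k hk
  rw [← hf, PowerSeries.coeff_mul]
  simp only [Finset.mul_sum, Finset.sum_mul]
  apply Finset.sum_congr rfl
  intro p _
  have hk0 : (k ! : ℝ) ≠ 0 := Nat.cast_ne_zero.mpr (Nat.factorial_ne_zero k)
  field_simp

end
end

section
/- Let λ be a nonzero real number and let p be a real polynomial of degree at most n. Then p(x) = Σ_{k=0}^{n} C_k φ_{k,λ}(x) as polynomials, where C_k = (1/k!)⟨(log_λ(1+t))^k | p(x)⟩_λ. -/
open Nat PowerSeries Finset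

noncomputable section

/-! ### Auxiliary lemmas for stmt4 -/

lemma coeff_pow_eq_zero' {f : PowerSeries ℝ} (hf : PowerSeries.constantCoeff f = 0)
    {n k : ℕ} (h : n < k) : PowerSeries.coeff n (f ^ k) = 0 := by
  obtain ⟨g, hg⟩ := pow_dvd_pow_of_dvd (PowerSeries.X_dvd_iff.mpr hf) k
  rw [hg, PowerSeries.coeff_mul]
  refine Finset.sum_eq_zero fun p hp => ?_
  rw [Finset.HasAntidiagonal.mem_antidiagonal] at hp
  rw [PowerSeries.coeff_X_pow, if_neg (by omega), zero_mul]

/-- composition of g with f, coefficientwise. -/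
def pc (g f : PowerSeries ℝ) : PowerSeries ℝ :=
  PowerSeries.mk fun n => ∑ k ∈ range (n + 1), PowerSeries.coeff k g * PowerSeries.coeff n (f ^ k)

lemma coeff_pc (g f : PowerSeries ℝ) (n : ℕ) :
    PowerSeries.coeff n (pc g f) =
      ∑ k ∈ range (n + 1), PowerSeries.coeff k g * PowerSeries.coeff n (f ^ k) := by
  simp [pc]

lemma coeff_pc_ext {f : PowerSeries ℝ} (hf : PowerSeries.constantCoeff f = 0)
    (g : PowerSeries ℝ) {n N : ℕ} (hN : n ≤ N) :
    PowerSeries.coeff n (pc g f) =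
      ∑ k ∈ range (N + 1), PowerSeries.coeff k g * PowerSeries.coeff n (f ^ k) := by
  rw [coeff_pc]
  refine Finset.sum_subset (by intro k hk; simp at *; omega) fun k hk hk2 => ?_
  rw [coeff_pow_eq_zero' hf (by simp at *; omega), mul_zero]

lemma antidiag_sum_eq' {k n : ℕ} (hk : k ≤ n) (W : ℕ → ℕ → ℝ) :
    ∑ q ∈ Finset.HasAntidiagonal.antidiagonal k, W q.1 q.2
      = ∑ a ∈ range (n+1), ∑ b ∈ range (n+1), if a + b = k then W a b else 0 := by
  rw [← Finset.sum_product', ← Finset.sum_filter]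
  apply Finset.sum_congr _ fun _ _ => rfl
  ext ⟨a, b⟩
  simp only [Finset.HasAntidiagonal.mem_antidiagonal, Finset.mem_filter, Finset.mem_product, Finset.mem_range]
  omega

lemma pc_mul {f : PowerSeries ℝ} (hf : PowerSeries.constantCoeff f = 0) (g h : PowerSeries ℝ) :
    pc (g * h) f = pc g f * pc h f := by
  ext n
  rw [PowerSeries.coeff_mul, coeff_pc]
  calc
    ∑ k ∈ range (n + 1), PowerSeries.coeff k (g * h) * PowerSeries.coeff n (f ^ k)
      = ∑ k ∈ range (n + 1), ∑ q ∈ Finset.HasAntidiagonal.antidiagonal k,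
          PowerSeries.coeff q.1 g * PowerSeries.coeff q.2 h *
            PowerSeries.coeff n (f ^ q.1 * f ^ q.2) := by
        refine Finset.sum_congr rfl fun k hk => ?_
        rw [PowerSeries.coeff_mul, Finset.sum_mul]
        refine Finset.sum_congr rfl fun q hq => ?_
        rw [Finset.HasAntidiagonal.mem_antidiagonal] at hq
        rw [← pow_add, hq]
    _ = ∑ k ∈ range (n + 1), ∑ q ∈ Finset.HasAntidiagonal.antidiagonal k, ∑ p ∈ Finset.HasAntidiagonal.antidiagonal n,
          PowerSeries.coeff q.1 g * PowerSeries.coeff q.2 h *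
            (PowerSeries.coeff p.1 (f ^ q.1) * PowerSeries.coeff p.2 (f ^ q.2)) := by
        refine Finset.sum_congr rfl fun k _ => Finset.sum_congr rfl fun q _ => ?_
        rw [PowerSeries.coeff_mul, Finset.mul_sum]
    _ = ∑ k ∈ range (n + 1), ∑ a ∈ range (n+1), ∑ b ∈ range (n+1),
          if a + b = k then
            ∑ p ∈ Finset.HasAntidiagonal.antidiagonal n,
              PowerSeries.coeff a g * PowerSeries.coeff b h *
                (PowerSeries.coeff p.1 (f ^ a) * PowerSeries.coeff p.2 (f ^ b))
          else 0 := by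
        refine Finset.sum_congr rfl fun k hk => ?_
        exact antidiag_sum_eq' (Nat.lt_succ_iff.mp (Finset.mem_range.mp hk))
          (fun a b => ∑ p ∈ Finset.HasAntidiagonal.antidiagonal n,
              PowerSeries.coeff a g * PowerSeries.coeff b h *
                (PowerSeries.coeff p.1 (f ^ a) * PowerSeries.coeff p.2 (f ^ b)))
    _ = ∑ a ∈ range (n+1), ∑ b ∈ range (n+1),
          ∑ p ∈ Finset.HasAntidiagonal.antidiagonal n,
              PowerSeries.coeff a g * PowerSeries.coeff b h *
                (PowerSeries.coeff p.1 (f ^ a) * PowerSeries.coeff p.2 (f ^ b)) := by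
        rw [Finset.sum_comm]
        refine Finset.sum_congr rfl fun a _ => ?_
        rw [Finset.sum_comm]
        refine Finset.sum_congr rfl fun b _ => ?_
        rw [Finset.sum_ite_eq (range (n+1)) (a + b)]
        split_ifs with hab
        · rfl
        · symm
          refine Finset.sum_eq_zero fun p hp => ?_
          rw [Finset.HasAntidiagonal.mem_antidiagonal] at hp
          simp only [Finset.mem_range] at hab
          rcases (by omega : p.1 < a ∨ p.2 < b) with h1 | h1
          · rw [coeff_pow_eq_zero' hf h1]; ring
          · rw [coeff_pow_eq_zero' hf h1]; ring
    _ = ∑ p ∈ Finset.HasAntidiagonal.antidiagonal n,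
          PowerSeries.coeff p.1 (pc g f) * PowerSeries.coeff p.2 (pc h f) := by
        refine ((Finset.sum_congr rfl fun a _ => Finset.sum_comm).trans Finset.sum_comm).trans ?_
        refine Finset.sum_congr rfl fun p hp => ?_
        rw [Finset.HasAntidiagonal.mem_antidiagonal] at hp
        rw [coeff_pc_ext hf g (show p.1 ≤ n by omega),
            coeff_pc_ext hf h (show p.2 ≤ n by omega), Finset.sum_mul_sum]
        refine Finset.sum_congr rfl fun a _ => Finset.sum_congr rfl fun b _ => by ring

lemma pc_one (f : PowerSeries ℝ) : pc 1 f = 1 := by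
  ext n
  simp [coeff_pc, PowerSeries.coeff_one, ite_mul, Finset.sum_ite_eq']

lemma pc_sub (g h f : PowerSeries ℝ) : pc (g - h) f = pc g f - pc h f := by
  ext n
  simp [coeff_pc, sub_mul, Finset.sum_sub_distrib]

lemma constantCoeff_degLog (l : ℝ) : PowerSeries.constantCoeff (degLog l) = 0 := by
  simp [degLog, ← PowerSeries.coeff_zero_eq_constantCoeff]

lemma ode_degLog (l : ℝ) :
    (1 + X) * (d⁄dX ℝ (degLog l)) = 1 + PowerSeries.C l * degLog l := by
  ext n
  rw [add_mul, one_mul, map_add, map_add]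
  cases n with
  | zero =>
      simp [degLog, PowerSeries.coeff_derivative, PowerSeries.coeff_mk]
  | succ n =>
      rw [PowerSeries.coeff_succ_X_mul, PowerSeries.coeff_derivative,
        PowerSeries.coeff_derivative]
      simp only [degLog, PowerSeries.coeff_mk, PowerSeries.coeff_one, PowerSeries.coeff_C_mul,
        Nat.succ_ne_zero, if_false, Nat.add_eq_zero, and_false, false_and]
      have h2 : n + 1 + 1 - 1 = n + 1 := rfl
      have h3 : n + 1 - 1 = n := rfl
      rw [h2, h3, Finset.prod_range_succ]
      have hfac : ((n + 1 + 1)! : ℝ) = (n + 2) * (n + 1)! := by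
        rw [show n + 1 + 1 = n + 2 from rfl, Nat.factorial_succ]; push_cast; ring
      have hne : ((n + 1)! : ℝ) ≠ 0 := by positivity
      rw [hfac]
      field_simp
      push_cast
      ring

/-- abbreviation for the coefficients of the degenerate exponential at x = 1. -/
def Ee (l : ℝ) (k : ℕ) : ℝ := dfall l 1 k / k !

lemma Ee_rec (l : ℝ) (k : ℕ) : ((k:ℝ)+1) * Ee l (k+1) + l * k * Ee l k = Ee l k := by
  have h1 : dfall l 1 (k+1) = dfall l 1 k * (1 - k * l) := by
    rw [dfall, dfall, Finset.prod_range_succ]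
  have h2 : ((k+1)! : ℝ) = ((k:ℝ)+1) * k ! := by rw [Nat.factorial_succ]; push_cast; ring
  have h3 : (k ! : ℝ) ≠ 0 := by positivity
  rw [Ee, Ee, h1, h2]
  field_simp
  ring

lemma term_ode (l : ℝ) (k : ℕ) :
    (1 + X) * (PowerSeries.C (Ee l k) * d⁄dX ℝ (degLog l ^ k)) =
      PowerSeries.C (k * Ee l k) * degLog l ^ (k - 1) +
        PowerSeries.C (l * k * Ee l k) * degLog l ^ k := by
  cases k with
  | zero => simp
  | succ k =>
      rw [Derivation.leibniz_pow]
      have h1 : (k + 1) • degLog l ^ (k + 1 - 1) • (d⁄dX ℝ) (degLog l) =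
          ((k:ℝ⟦X⟧) + 1) * (degLog l ^ k * (d⁄dX ℝ) (degLog l)) := by
        rw [smul_eq_mul, nsmul_eq_mul]
        push_cast
        ring
      rw [h1]
      have h2 : (1 + X) * (PowerSeries.C (Ee l (k+1)) *
          (((k:ℝ⟦X⟧) + 1) * (degLog l ^ k * (d⁄dX ℝ) (degLog l)))) =
          PowerSeries.C (Ee l (k+1)) * ((k:ℝ⟦X⟧) + 1) * degLog l ^ k *
            ((1 + X) * (d⁄dX ℝ) (degLog l)) := by ring
      rw [h2, ode_degLog]
      have h3 : ((k:ℝ⟦X⟧) + 1) = PowerSeries.C ((k:ℝ) + 1) := by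
        rw [map_add, map_one, PowerSeries.C_eq_algebraMap, map_natCast]
      rw [h3]
      have h4 : (k + 1 - 1 : ℕ) = k := rfl
      rw [h4]
      push_cast
      simp only [map_mul, map_add, map_one]
      ring

/-- partial sums of the composition e_λ(log_λ(1+t)). -/
def SS (l : ℝ) (N : ℕ) : PowerSeries ℝ :=
  ∑ k ∈ range (N + 1), PowerSeries.C (Ee l k) * degLog l ^ k

lemma ode_SS (l : ℝ) (N : ℕ) :
    (1 + X) * (d⁄dX ℝ (SS l N)) =
      SS l N + PowerSeries.C ((l * N - 1) * Ee l N) * degLog l ^ N := by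
  rw [SS, map_sum, Finset.mul_sum]
  have step : ∀ k ∈ range (N+1), (1 + X) * (d⁄dX ℝ) (PowerSeries.C (Ee l k) * degLog l ^ k) =
      PowerSeries.C (k * Ee l k) * degLog l ^ (k - 1) +
        PowerSeries.C (l * k * Ee l k) * degLog l ^ k := by
    intro k _
    rw [Derivation.leibniz, derivative_C, smul_zero, add_zero, smul_eq_mul]
    exact term_ode l k
  rw [Finset.sum_congr rfl step, Finset.sum_add_distrib]
  have hshift : ∑ k ∈ range (N+1), PowerSeries.C (k * Ee l k) * degLog l ^ (k - 1) =
      ∑ k ∈ range N, PowerSeries.C (((k:ℝ)+1) * Ee l (k+1)) * degLog l ^ k := by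
    rw [Finset.sum_range_succ']
    simp
  rw [hshift, Finset.sum_range_succ (fun k => PowerSeries.C (l * k * Ee l k) * degLog l ^ k),
    ← add_assoc, ← Finset.sum_add_distrib]
  have hcomb : ∑ k ∈ range N, (PowerSeries.C (((k:ℝ)+1) * Ee l (k+1)) * degLog l ^ k +
      PowerSeries.C (l * k * Ee l k) * degLog l ^ k) =
      ∑ k ∈ range N, PowerSeries.C (Ee l k) * degLog l ^ k := by
    refine Finset.sum_congr rfl fun k _ => ?_
    rw [← add_mul, ← map_add, Ee_rec]
  rw [hcomb, Finset.sum_range_succ (fun k => PowerSeries.C (Ee l k) * degLog l ^ k)]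
  rw [map_mul]
  have hC : PowerSeries.C ((l * N - 1) * Ee l N) =
      PowerSeries.C (l * (N:ℝ)) * PowerSeries.C (Ee l N) - PowerSeries.C (Ee l N) := by
    rw [← map_mul, ← map_sub]; congr 1; ring
  rw [hC]
  ring

lemma coeff_degExp_one (l : ℝ) (k : ℕ) : PowerSeries.coeff k (degExp l 1) = Ee l k := by
  simp [degExp, Ee]

lemma coeff_SS (l : ℝ) {n N : ℕ} (hn : n ≤ N) :
    PowerSeries.coeff n (SS l N) = PowerSeries.coeff n (pc (degExp l 1) (degLog l)) := by
  rw [SS, map_sum, coeff_pc_ext (constantCoeff_degLog l) _ hn]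
  refine Finset.sum_congr rfl fun k _ => ?_
  rw [PowerSeries.coeff_C_mul, coeff_degExp_one]

lemma key1 (l : ℝ) : pc (degExp l 1) (degLog l) = 1 + X := by
  have hrec : ∀ n : ℕ, PowerSeries.coeff (n+2) (pc (degExp l 1) (degLog l)) * ((n:ℝ)+2) +
      PowerSeries.coeff (n+1) (pc (degExp l 1) (degLog l)) * ((n:ℝ)+1) =
      PowerSeries.coeff (n+1) (pc (degExp l 1) (degLog l)) := by
    intro n
    have h := congrArg (PowerSeries.coeff (n+1)) (ode_SS l (n+2))
    rw [add_mul, one_mul, map_add, PowerSeries.coeff_succ_X_mul, map_add,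
      PowerSeries.coeff_derivative, PowerSeries.coeff_derivative, PowerSeries.coeff_C_mul,
      coeff_pow_eq_zero' (constantCoeff_degLog l) (by omega : n+1 < n+2), mul_zero, add_zero,
      coeff_SS l (by omega : n+2 ≤ n+2), coeff_SS l (by omega : n+1 ≤ n+2)] at h
    push_cast at h ⊢
    linarith [h]
  have h0 : PowerSeries.coeff 0 (pc (degExp l 1) (degLog l)) = 1 := by
    simp [coeff_pc, degExp, dfall]
  have h1 : PowerSeries.coeff 1 (pc (degExp l 1) (degLog l)) = 1 := by
    rw [coeff_pc]
    rw [Finset.sum_range_succ, Finset.sum_range_succ, Finset.sum_range_zero]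
    simp [degExp, degLog, dfall]
  have h2 : ∀ m : ℕ, PowerSeries.coeff (m + 2) (pc (degExp l 1) (degLog l)) = 0 := by
    intro m
    induction m with
    | zero =>
        have := hrec 0
        rw [h1] at this
        push_cast at this
        linarith
    | succ m ih =>
        have := hrec (m+1)
        rw [show m + 1 + 1 = m + 2 from rfl, ih, zero_mul, add_zero] at this
        rcases mul_eq_zero.mp this with h | h
        · exact h
        · exact absurd h (by positivity)
  ext n
  match n with
  | 0 =>
      rw [map_add, PowerSeries.coeff_one, PowerSeries.coeff_X]
      rw [PowerSeries.coeff_zero_eq_constantCoeff] at h0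
      simpa using h0
  | 1 =>
      rw [map_add, PowerSeries.coeff_one, PowerSeries.coeff_X]
      simpa using h1
  | (m+2) =>
      rw [map_add, PowerSeries.coeff_one, PowerSeries.coeff_X, if_neg (by omega),
        if_neg (by omega)]
      simpa using h2 m

lemma key2 (l : ℝ) : pc (degExp l 1 - 1) (degLog l) = X := by
  rw [pc_sub, key1, pc_one]
  ring

lemma key3 (l : ℝ) (m : ℕ) : pc ((degExp l 1 - 1) ^ m) (degLog l) = X ^ m := by
  induction m with
  | zero => simpa using pc_one (degLog l)
  | succ m ih =>
      rw [pow_succ, pow_succ, pc_mul (constantCoeff_degLog l), ih, key2]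

lemma hkey (l : ℝ) {n : ℕ} (m : ℕ) {j : ℕ} (hj : j ≤ n) :
    ∑ k ∈ range (n + 1),
      PowerSeries.coeff k ((degExp l 1 - 1) ^ m) * PowerSeries.coeff j (degLog l ^ k) =
      if j = m then 1 else 0 := by
  have h := coeff_pc_ext (constantCoeff_degLog l) ((degExp l 1 - 1) ^ m) hj
  rw [key3, PowerSeries.coeff_X_pow] at h
  exact h.symm

lemma constantCoeff_F (l : ℝ) : PowerSeries.constantCoeff (degExp l 1 - 1) = 0 := by
  rw [map_sub, map_one, ← PowerSeries.coeff_zero_eq_constantCoeff]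
  simp [degExp, dfall]

theorem stmt4 (l : ℝ) (hl : l ≠ 0) (n : ℕ) (p : Polynomial ℝ) (hp : p.natDegree ≤ n)
    (c : ℕ → ℝ) (hc : p = ∑ k ∈ range (n + 1), Polynomial.C (c k) * dfallPoly l k) (x : ℝ) :
    p.eval x =
      ∑ k ∈ range (n + 1),
        (1 / (k ! : ℝ) *
            ∑ j ∈ range (n + 1), (j ! : ℝ) * PowerSeries.coeff j (degLog l ^ k) * c j) *
          dBell l k x := by
  have hL0 := constantCoeff_degLog l
  have hF0 := constantCoeff_F l
  have hLHS : p.eval x = ∑ j ∈ range (n+1), c j * dfall l x j := by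
    rw [hc, Polynomial.eval_finset_sum]
    refine Finset.sum_congr rfl fun k _ => ?_
    rw [Polynomial.eval_mul, Polynomial.eval_C, dfallPoly, Polynomial.eval_prod, dfall]
    congr 1
    exact Finset.prod_congr rfl fun i _ => by simp
  rw [hLHS]
  symm
  calc
    ∑ k ∈ range (n + 1),
        (1 / (k ! : ℝ) *
            ∑ j ∈ range (n + 1), (j ! : ℝ) * PowerSeries.coeff j (degLog l ^ k) * c j) *
          dBell l k x
      = ∑ k ∈ range (n + 1), ∑ m ∈ range (n + 1), ∑ j ∈ range (n + 1),
          (1 / (k ! : ℝ) * ((j ! : ℝ) * PowerSeries.coeff j (degLog l ^ k) * c j)) *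
            (dS2 l k m * dfall l x m) := by
        refine Finset.sum_congr rfl fun k hk => ?_
        rw [Finset.mem_range] at hk
        have hext : dBell l k x = ∑ m ∈ range (n + 1), dS2 l k m * dfall l x m := by
          rw [dBell]
          refine Finset.sum_subset (by intro m hm; simp at *; omega) fun m hm hm2 => ?_
          simp only [Finset.mem_range] at hm hm2
          rw [dS2, coeff_pow_eq_zero' hF0 (by omega), mul_zero, zero_mul]
        rw [hext, Finset.mul_sum]
        refine Finset.sum_congr rfl fun m _ => ?_
        rw [Finset.mul_sum, Finset.sum_mul]
    _ = ∑ k ∈ range (n + 1), ∑ m ∈ range (n + 1), ∑ j ∈ range (n + 1),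
          (c j * ((j ! : ℝ) / (m ! : ℝ)) * dfall l x m) *
            (PowerSeries.coeff k ((degExp l 1 - 1) ^ m) *
              PowerSeries.coeff j (degLog l ^ k)) := by
        refine Finset.sum_congr rfl fun k _ => Finset.sum_congr rfl fun m _ =>
          Finset.sum_congr rfl fun j _ => ?_
        rw [dS2]
        have hk : (k ! : ℝ) ≠ 0 := by positivity
        have hm : (m ! : ℝ) ≠ 0 := by positivity
        field_simp
    _ = ∑ j ∈ range (n + 1), ∑ m ∈ range (n + 1),
          (c j * ((j ! : ℝ) / (m ! : ℝ)) * dfall l x m) *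
            ∑ k ∈ range (n + 1),
              PowerSeries.coeff k ((degExp l 1 - 1) ^ m) *
                PowerSeries.coeff j (degLog l ^ k) := by
        rw [Finset.sum_comm]
        refine (Finset.sum_congr rfl fun m _ => Finset.sum_comm).trans ?_
        rw [Finset.sum_comm]
        refine Finset.sum_congr rfl fun j _ => Finset.sum_congr rfl fun m _ => ?_
        rw [Finset.mul_sum]
    _ = ∑ j ∈ range (n + 1), c j * dfall l x j := by
        refine Finset.sum_congr rfl fun j hj => ?_
        rw [Finset.mem_range] at hj
        have : ∀ m ∈ range (n + 1),
            (c j * ((j ! : ℝ) / (m ! : ℝ)) * dfall l x m) *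
              (∑ k ∈ range (n + 1),
                PowerSeries.coeff k ((degExp l 1 - 1) ^ m) *
                  PowerSeries.coeff j (degLog l ^ k)) =
            if j = m then c j * ((j ! : ℝ) / (m ! : ℝ)) * dfall l x m else 0 := by
          intro m _
          rw [hkey l m (by omega), mul_ite, mul_one, mul_zero]
        rw [Finset.sum_congr rfl this, Finset.sum_ite_eq (range (n+1)) j
          (fun m => c j * ((j ! : ℝ) / (m ! : ℝ)) * dfall l x m),
          if_pos (Finset.mem_range.mpr (by omega))]
        have : ((j ! : ℝ) / (j ! : ℝ)) = 1 := div_self (by positivity)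
        rw [this, mul_one]

end
end

section
/- Let λ be a nonzero real number and m a positive integer. For every n ≥ 0, the degenerate Bernoulli polynomials satisfy β_{n,λ}(x) = Σ_{k=0}^{n} { Σ_{l=0}^{n} Σ_{j=k}^{l} Σ_{i=0}^{l−j} C(n,l) C(l,j) β_{n−l,λ} S_{1,λ/m}(j,k) m^{l−k−i} (−1)^i S_1(l−j,i) } d_{m,λ}(k,x) as polynomials in x, where C(·,·) denotes binomial coefficients. -/
open Nat PowerSeries Finset

noncomputable section

namespace Aux

open Polynomial in
lemma dfall_succ (l x : ℝ) (n : ℕ) : dfall l x (n+1) = dfall l x n * (x - n * l) := by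
  simp [dfall, Finset.prod_range_succ]

lemma dfall_zero (l x : ℝ) : dfall l x 0 = 1 := by simp [dfall]

lemma coeff_degExp (l x : ℝ) (n : ℕ) :
    PowerSeries.coeff n (degExp l x) = dfall l x n / n ! := by
  simp [degExp]

lemma degExp_zero (l : ℝ) : degExp l 0 = 1 := by
  ext n
  rw [coeff_degExp, PowerSeries.coeff_one]
  cases n with
  | zero => simp [dfall]
  | succ k =>
    rw [if_neg (Nat.succ_ne_zero k)]
    have h0 : (0:ℕ) ∈ range (k+1) := Finset.mem_range.mpr (Nat.succ_pos k)
    have : dfall l 0 (k+1) = 0 := Finset.prod_eq_zero h0 (by simp)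
    simp [this]

/-- degenerate Vandermonde -/
lemma dfall_add (a x y : ℝ) (n : ℕ) :
    dfall a (x + y) n = ∑ j ∈ range (n+1), (n.choose j : ℝ) * dfall a x j * dfall a y (n - j) := by
  induction n with
  | zero => simp [dfall]
  | succ n ih =>
    have hT : ∑ j ∈ range (n+2), ((n+1).choose j : ℝ) * dfall a x j * dfall a y (n + 1 - j)
        = (∑ j ∈ range (n+1), (n.choose j : ℝ) * dfall a x (j+1) * dfall a y (n - j))
          + ∑ j ∈ range (n+1), (n.choose j : ℝ) * dfall a x j * dfall a y (n - j + 1) := by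
      rw [Finset.sum_range_succ' _ (n+1)]
      have step1 : ∀ j ∈ range (n+1),
          ((n+1).choose (j+1) : ℝ) * dfall a x (j+1) * dfall a y (n + 1 - (j+1))
            = (n.choose j : ℝ) * dfall a x (j+1) * dfall a y (n - j)
              + (n.choose (j+1) : ℝ) * dfall a x (j+1) * dfall a y (n - j) := by
        intro j _
        rw [Nat.succ_sub_succ, Nat.choose_succ_succ]
        push_cast; ring
      rw [Finset.sum_congr rfl step1, Finset.sum_add_distrib, add_assoc]
      congr 1
      have e1 : ∑ j ∈ range (n+1), (n.choose j : ℝ) * dfall a x j * dfall a y (n - j + 1)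
          = ∑ j ∈ range (n+2), (n.choose j : ℝ) * dfall a x j * dfall a y (n + 1 - j) := by
        rw [Finset.sum_range_succ (fun j => (n.choose j : ℝ) * dfall a x j * dfall a y (n + 1 - j)) (n+1),
          Nat.choose_succ_self]
        push_cast
        rw [zero_mul, zero_mul, add_zero]
        apply Finset.sum_congr rfl
        intro j hj
        rw [Finset.mem_range, Nat.lt_succ_iff] at hj
        rw [Nat.succ_sub hj]
      rw [e1, Finset.sum_range_succ' _ (n+1)]
      simp [Nat.succ_sub_succ]
    rw [hT, dfall_succ, ih, Finset.sum_mul]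
    have key : ∀ j ∈ range (n+1),
        (n.choose j : ℝ) * dfall a x j * dfall a y (n - j) * (x + y - n * a)
          = ((n.choose j : ℝ) * (dfall a x (j+1)) * dfall a y (n - j))
            + ((n.choose j : ℝ) * dfall a x j * dfall a y (n - j + 1)) := by
      intro j hj
      rw [Finset.mem_range, Nat.lt_succ_iff] at hj
      rw [dfall_succ, dfall_succ, Nat.cast_sub hj]
      ring
    rw [Finset.sum_congr rfl key, Finset.sum_add_distrib]

lemma degExp_mul (a x y : ℝ) : degExp a x * degExp a y = degExp a (x + y) := by
  ext n
  rw [PowerSeries.coeff_mul, Finset.Nat.sum_antidiagonal_eq_sum_range_succ_mk, coeff_degExp,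
    dfall_add, Finset.sum_div]
  apply Finset.sum_congr rfl
  intro k hk
  rw [Finset.mem_range, Nat.lt_succ_iff] at hk
  rw [coeff_degExp, coeff_degExp]
  have hfac : (n ! : ℝ) = n.choose k * (k ! * (n-k)!) := by
    rw [← Nat.choose_mul_factorial_mul_factorial hk]; push_cast; ring
  have h1 : (k ! : ℝ) ≠ 0 := Nat.cast_ne_zero.mpr (Nat.factorial_ne_zero k)
  have h2 : ((n-k)! : ℝ) ≠ 0 := Nat.cast_ne_zero.mpr (Nat.factorial_ne_zero (n-k))
  have h3 : (n.choose k : ℝ) ≠ 0 := Nat.cast_ne_zero.mpr (Nat.choose_pos hk).ne'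
  rw [hfac]
  field_simp

lemma degExp_pow (a x : ℝ) (j : ℕ) : (degExp a x) ^ j = degExp a (j * x) := by
  induction j with
  | zero => simp [degExp_zero]
  | succ j ih =>
    rw [pow_succ, ih, degExp_mul]
    norm_num
    ring_nf

lemma dfall_smul (l x c : ℝ) (hc : c ≠ 0) (n : ℕ) :
    dfall l (c * x) n = c ^ n * dfall (l / c) x n := by
  unfold dfall
  have hcn : c ^ n = ∏ _i ∈ range n, c := by rw [Finset.prod_const, Finset.card_range]
  rw [hcn, ← Finset.prod_mul_distrib]
  apply Finset.prod_congr rfl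
  intro i _
  field_simp

lemma degExp_diag (a : ℝ) : degExp a a = 1 + PowerSeries.C a * PowerSeries.X := by
  ext n
  rw [coeff_degExp, map_add, PowerSeries.coeff_one, PowerSeries.coeff_C_mul,
    PowerSeries.coeff_X]
  match n with
  | 0 => simp [dfall]
  | 1 => simp [dfall]
  | (n+2) =>
    have h1 : (1:ℕ) ∈ range (n+2) := Finset.mem_range.mpr (by omega)
    have : dfall a a (n+2) = 0 := Finset.prod_eq_zero h1 (by push_cast; ring)
    simp [this]

lemma coeff_degLog (a : ℝ) (n : ℕ) :
    PowerSeries.coeff n (degLog a)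
      = if n = 0 then 0 else (∏ j ∈ range (n - 1), (a - (j + 1))) / n ! := by
  simp [degLog]

lemma constantCoeff_degLog (a : ℝ) : PowerSeries.constantCoeff (degLog a) = 0 := by
  rw [← PowerSeries.coeff_zero_eq_constantCoeff, coeff_degLog]; simp

lemma degExp_one_param (a : ℝ) :
    degExp 1 a = 1 + PowerSeries.C a * degLog a := by
  ext n
  rw [coeff_degExp, map_add, PowerSeries.coeff_one, PowerSeries.coeff_C_mul, coeff_degLog]
  cases n with
  | zero => simp [dfall]
  | succ k =>
    rw [if_neg (Nat.succ_ne_zero k), if_neg (Nat.succ_ne_zero k)]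
    have : dfall 1 a (k+1) = a * ∏ j ∈ range k, (a - (j + 1)) := by
      unfold dfall
      rw [Finset.prod_range_succ']
      simp [mul_comm]
    rw [this, Nat.succ_sub_one]
    ring

lemma coeff_pow_eq_zero {f : PowerSeries ℝ} (hf : PowerSeries.constantCoeff f = 0) :
    ∀ (k n : ℕ), n < k → PowerSeries.coeff n (f ^ k) = 0 := by
  intro k
  induction k with
  | zero => intro n h; exact absurd h (Nat.not_lt_zero n)
  | succ k ih =>
    intro n hn
    rw [pow_succ, PowerSeries.coeff_mul]
    apply Finset.sum_eq_zero
    intro p hp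
    rw [Finset.HasAntidiagonal.mem_antidiagonal] at hp
    by_cases h2 : p.2 = 0
    · have : PowerSeries.coeff p.2 f = 0 := by
        rw [h2, PowerSeries.coeff_zero_eq_constantCoeff, hf]
      rw [this, mul_zero]
    · have : p.1 < k := by omega
      rw [ih p.1 this, zero_mul]

/-- composition g ∘ f of power series, for f with zero constant term. -/
def pc (f g : PowerSeries ℝ) : PowerSeries ℝ :=
  PowerSeries.mk fun n => ∑ d ∈ range (n+1), PowerSeries.coeff d g * PowerSeries.coeff n (f ^ d)

lemma coeff_pc (f g : PowerSeries ℝ) (n : ℕ) :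
    PowerSeries.coeff n (pc f g)
      = ∑ d ∈ range (n+1), PowerSeries.coeff d g * PowerSeries.coeff n (f ^ d) := by
  simp [pc]

lemma sum_coeff_ext {f : PowerSeries ℝ} (hf : PowerSeries.constantCoeff f = 0)
    (c : ℕ → ℝ) (n N : ℕ) (hN : n < N) :
    ∑ d ∈ range N, c d * PowerSeries.coeff n (f ^ d)
      = ∑ d ∈ range (n+1), c d * PowerSeries.coeff n (f ^ d) := by
  symm
  apply Finset.sum_subset
  · intro d hd; rw [Finset.mem_range] at *; omega
  · intro d _ hd
    rw [Finset.mem_range, Nat.lt_succ_iff, not_le] at hd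
    rw [coeff_pow_eq_zero hf d n hd, mul_zero]

lemma coeff_eval₂ {f : PowerSeries ℝ} (hf : PowerSeries.constantCoeff f = 0)
    (P : Polynomial ℝ) (n : ℕ) :
    PowerSeries.coeff n (Polynomial.eval₂ (PowerSeries.C (R := ℝ)) f P)
      = ∑ d ∈ range (n+1), P.coeff d * PowerSeries.coeff n (f ^ d) := by
  rw [Polynomial.eval₂_eq_sum_range, map_sum]
  simp only [PowerSeries.coeff_C_mul]
  rcases le_or_gt (P.natDegree + 1) (n + 1) with h | h
  · rw [← sum_coeff_ext hf (fun d => P.coeff d) n (n+1) (Nat.lt_succ_self n)]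
    apply Finset.sum_subset
    · intro d hd; rw [Finset.mem_range] at *; omega
    · intro d _ hd
      rw [Finset.mem_range, not_lt] at hd
      rw [Polynomial.coeff_eq_zero_of_natDegree_lt (by omega), zero_mul]
  · rw [sum_coeff_ext hf (fun d => P.coeff d) n (P.natDegree + 1) (by omega)]

lemma pc_eq_trunc {f : PowerSeries ℝ} (hf : PowerSeries.constantCoeff f = 0)
    (g : PowerSeries ℝ) {n N : ℕ} (h : n < N) :
    PowerSeries.coeff n (pc f g)
      = PowerSeries.coeff n (Polynomial.eval₂ (PowerSeries.C (R := ℝ)) f (PowerSeries.trunc N g)) := by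
  rw [coeff_pc, coeff_eval₂ hf]
  apply Finset.sum_congr rfl
  intro d hd
  rw [Finset.mem_range, Nat.lt_succ_iff] at hd
  rw [PowerSeries.coeff_trunc, if_pos (by omega)]

lemma pc_mul {f : PowerSeries ℝ} (hf : PowerSeries.constantCoeff f = 0)
    (g h : PowerSeries ℝ) : pc f (g * h) = pc f g * pc f h := by
  ext n
  rw [pc_eq_trunc hf (g * h) (Nat.lt_succ_self n)]
  have key : PowerSeries.coeff n (Polynomial.eval₂ (PowerSeries.C (R := ℝ)) f (PowerSeries.trunc (n+1) (g * h)))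
      = PowerSeries.coeff n (Polynomial.eval₂ (PowerSeries.C (R := ℝ)) f
          (PowerSeries.trunc (n+1) g * PowerSeries.trunc (n+1) h)) := by
    rw [coeff_eval₂ hf, coeff_eval₂ hf]
    apply Finset.sum_congr rfl
    intro d hd
    rw [Finset.mem_range, Nat.lt_succ_iff] at hd
    congr 1
    rw [PowerSeries.coeff_trunc, if_pos (by omega), PowerSeries.coeff_mul, Polynomial.coeff_mul]
    apply Finset.sum_congr rfl
    intro p hp
    rw [Finset.HasAntidiagonal.mem_antidiagonal] at hp
    rw [PowerSeries.coeff_trunc, if_pos (by omega), PowerSeries.coeff_trunc, if_pos (by omega)]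
  rw [key, Polynomial.eval₂_mul, PowerSeries.coeff_mul, PowerSeries.coeff_mul]
  apply Finset.sum_congr rfl
  intro p hp
  rw [Finset.HasAntidiagonal.mem_antidiagonal] at hp
  rw [pc_eq_trunc hf g (show p.1 < n + 1 by omega), pc_eq_trunc hf h (show p.2 < n + 1 by omega)]

lemma pc_C (f : PowerSeries ℝ) (c : ℝ) : pc f (PowerSeries.C c) = PowerSeries.C c := by
  ext n
  rw [coeff_pc, Finset.sum_eq_single 0]
  · simp [PowerSeries.coeff_C]
  · intro d _ hd
    rw [PowerSeries.coeff_C, if_neg hd, zero_mul]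
  · intro hn
    exact absurd (Finset.mem_range.mpr (Nat.succ_pos n)) hn

lemma pc_one (f : PowerSeries ℝ) : pc f 1 = 1 := by
  have := pc_C f 1
  rwa [map_one] at this

lemma pc_add (f g h : PowerSeries ℝ) : pc f (g + h) = pc f g + pc f h := by
  ext n
  simp [pc, add_mul, Finset.sum_add_distrib]

lemma pc_sub (f g h : PowerSeries ℝ) : pc f (g - h) = pc f g - pc f h := by
  ext n
  simp [pc, sub_mul, Finset.sum_sub_distrib]

lemma pc_X {f : PowerSeries ℝ} (hf : PowerSeries.constantCoeff f = 0) : pc f PowerSeries.X = f := by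
  ext n
  rw [coeff_pc]
  cases n with
  | zero =>
    simp [PowerSeries.coeff_X, ← PowerSeries.coeff_zero_eq_constantCoeff] at hf ⊢
    exact hf.symm
  | succ k =>
    rw [Finset.sum_eq_single 1]
    · simp [PowerSeries.coeff_X]
    · intro d _ hd
      rw [PowerSeries.coeff_X, if_neg hd, zero_mul]
    · intro hn
      exact absurd (Finset.mem_range.mpr (by omega)) hn

lemma pc_pow {f : PowerSeries ℝ} (hf : PowerSeries.constantCoeff f = 0)
    (g : PowerSeries ℝ) (j : ℕ) : pc f (g ^ j) = (pc f g) ^ j := by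
  induction j with
  | zero => simpa using pc_one f
  | succ j ih => rw [pow_succ, pow_succ, pc_mul hf, ih]

lemma pc_rescale (f g : PowerSeries ℝ) (a : ℝ) :
    pc f (PowerSeries.rescale a g) = pc (PowerSeries.C a * f) g := by
  ext n
  rw [coeff_pc, coeff_pc]
  apply Finset.sum_congr rfl
  intro d _
  rw [PowerSeries.coeff_rescale, mul_pow, ← map_pow, PowerSeries.coeff_C_mul]
  ring

lemma rescale_pc (f g : PowerSeries ℝ) (a : ℝ) :
    PowerSeries.rescale a (pc f g) = pc (PowerSeries.rescale a f) g := by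
  ext n
  rw [PowerSeries.coeff_rescale, coeff_pc, coeff_pc, Finset.mul_sum]
  apply Finset.sum_congr rfl
  intro d _
  rw [← map_pow, PowerSeries.coeff_rescale]
  ring

lemma dfallPoly_eval (l t : ℝ) (k : ℕ) : (dfallPoly l k).eval t = dfall l t k := by
  simp [dfallPoly, dfall, Polynomial.eval_prod]

/-- Master lemma: e_a^x ∘ log_a = e_1^x. -/
lemma pc_degLog_degExp {a : ℝ} (ha : a ≠ 0) (x : ℝ) :
    pc (degLog a) (degExp a x) = degExp 1 x := by
  have hL := constantCoeff_degLog a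
  have key : ∀ j : ℕ, pc (degLog a) (degExp a ((j:ℝ) * a)) = degExp 1 ((j:ℝ) * a) := by
    intro j
    rw [← degExp_pow a a j, pc_pow hL, degExp_diag, pc_add, pc_one, pc_mul hL, pc_C, pc_X hL,
      ← degExp_one_param, degExp_pow]
  ext n
  set P : Polynomial ℝ := ∑ d ∈ range (n+1),
      Polynomial.C (PowerSeries.coeff n (degLog a ^ d) / d !) * dfallPoly a d with hP
  set Q : Polynomial ℝ := Polynomial.C ((1:ℝ) / n !) * dfallPoly 1 n with hQ
  have evalP : ∀ t : ℝ, P.eval t = PowerSeries.coeff n (pc (degLog a) (degExp a t)) := by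
    intro t
    rw [coeff_pc, hP]
    rw [Polynomial.eval_finset_sum]
    simp only [Polynomial.eval_mul, Polynomial.eval_C, dfallPoly_eval]
    apply Finset.sum_congr rfl
    intro d _
    rw [coeff_degExp]
    ring
  have evalQ : ∀ t : ℝ, Q.eval t = PowerSeries.coeff n (degExp 1 t) := by
    intro t
    rw [hQ, Polynomial.eval_mul, Polynomial.eval_C, dfallPoly_eval, coeff_degExp]
    ring
  have hinj : Function.Injective (fun j : ℕ => (j:ℝ) * a) := by
    intro i j h
    simp only at h
    have := mul_right_cancel₀ ha h
    exact_mod_cast this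
  have hsub : P - Q = 0 := by
    apply Polynomial.eq_zero_of_infinite_isRoot
    apply Set.Infinite.mono (s := Set.range fun j : ℕ => (j:ℝ) * a)
    · rintro _ ⟨j, rfl⟩
      simp only [Set.mem_setOf_eq, Polynomial.IsRoot, Polynomial.eval_sub, evalP, evalQ, key j,
        sub_self]
    · exact Set.infinite_range_of_injective hinj
  have hPQ : P = Q := sub_eq_zero.mp hsub
  rw [← evalP x, hPQ, evalQ x]

section Main

/-- the compositional inverse of f = (e_λ^m(t)-1)/m -/
def Gs (l : ℝ) (m : ℕ) : PowerSeries ℝ :=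
  PowerSeries.C (1/(m:ℝ)) * PowerSeries.rescale (m:ℝ) (degLog (l/m))

/-- f = (e_λ^m(t)-1)/m -/
def fs (l : ℝ) (m : ℕ) : PowerSeries ℝ := (degExp l (m:ℝ) - 1) * PowerSeries.C (1/(m:ℝ))

/-- E = e_m^{-1}(t) -/
def Es (m : ℕ) : PowerSeries ℝ := degExp (m:ℝ) (-1)

lemma constantCoeff_Gs (l : ℝ) (m : ℕ) : PowerSeries.constantCoeff (Gs l m) = 0 := by
  have h : PowerSeries.coeff 0 (degLog (l/(m:ℝ))) = 0 := by rw [coeff_degLog]; simp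
  simp [Gs, ← PowerSeries.coeff_zero_eq_constantCoeff, PowerSeries.coeff_rescale, h]

lemma constantCoeff_fs (l : ℝ) (m : ℕ) : PowerSeries.constantCoeff (fs l m) = 0 := by
  rw [fs, map_mul, map_sub, ← PowerSeries.coeff_zero_eq_constantCoeff, coeff_degExp]
  simp [dfall]

lemma rescale_X (a : ℝ) : PowerSeries.rescale a (PowerSeries.X : PowerSeries ℝ)
    = PowerSeries.C a * PowerSeries.X := by
  ext n
  rw [PowerSeries.coeff_rescale, PowerSeries.coeff_C_mul, PowerSeries.coeff_X]
  rcases eq_or_ne n 1 with rfl | h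
  · simp
  · simp [h]

lemma degExp_l_m (l : ℝ) {m : ℕ} (hm : 0 < m) :
    degExp l (m:ℝ) = PowerSeries.rescale (m:ℝ) (degExp (l/m) 1) := by
  have hm' : ((m:ℝ)) ≠ 0 := Nat.cast_ne_zero.mpr hm.ne'
  ext n
  rw [PowerSeries.coeff_rescale, coeff_degExp, coeff_degExp]
  have h := dfall_smul l 1 (m:ℝ) hm' n
  rw [mul_one] at h
  rw [h]; ring

lemma degExp_l_one (l : ℝ) {m : ℕ} (hm : 0 < m) :
    degExp l 1 = PowerSeries.rescale (m:ℝ) (degExp (l/m) (1/(m:ℝ))) := by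
  have hm' : ((m:ℝ)) ≠ 0 := Nat.cast_ne_zero.mpr hm.ne'
  ext n
  rw [PowerSeries.coeff_rescale, coeff_degExp, coeff_degExp]
  have h := dfall_smul l (1/(m:ℝ)) (m:ℝ) hm' n
  rw [mul_one_div, div_self hm'] at h
  rw [h]; ring

lemma rescale_degExp_one {m : ℕ} (hm : 0 < m) :
    PowerSeries.rescale (m:ℝ) (degExp 1 (1/(m:ℝ))) = degExp (m:ℝ) 1 := by
  have hm' : ((m:ℝ)) ≠ 0 := Nat.cast_ne_zero.mpr hm.ne'
  ext n
  rw [PowerSeries.coeff_rescale, coeff_degExp, coeff_degExp]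
  have h := dfall_smul (m:ℝ) (1/(m:ℝ)) (m:ℝ) hm' n
  rw [mul_one_div, div_self hm'] at h
  rw [h]; ring

lemma pc_Gs_rescale (l : ℝ) {m : ℕ} (hm : 0 < m) (hl : l ≠ 0) (x' : ℝ) :
    pc (Gs l m) (PowerSeries.rescale (m:ℝ) (degExp (l/m) x'))
      = PowerSeries.rescale (m:ℝ) (degExp 1 x') := by
  have hm' : ((m:ℝ)) ≠ 0 := Nat.cast_ne_zero.mpr hm.ne'
  rw [pc_rescale]
  have hc : PowerSeries.C (m:ℝ) * Gs l m = PowerSeries.rescale (m:ℝ) (degLog (l/m)) := by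
    rw [Gs, ← mul_assoc, ← map_mul]
    rw [show (m:ℝ) * (1/(m:ℝ)) = 1 by rw [mul_one_div, div_self hm'], map_one, one_mul]
  rw [hc, ← rescale_pc, pc_degLog_degExp (div_ne_zero hl hm') x']

lemma pc_Gs_fs (l : ℝ) {m : ℕ} (hm : 0 < m) (hl : l ≠ 0) :
    pc (Gs l m) (fs l m) = PowerSeries.X := by
  have hm' : ((m:ℝ)) ≠ 0 := Nat.cast_ne_zero.mpr hm.ne'
  have hG := constantCoeff_Gs l m
  rw [fs, pc_mul hG, pc_C, pc_sub, pc_one, degExp_l_m l hm, pc_Gs_rescale l hm hl 1]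
  have h11 : degExp 1 1 = 1 + PowerSeries.X := by
    have := degExp_diag 1
    rwa [map_one, one_mul] at this
  rw [h11, map_add, map_one, rescale_X]
  rw [show (1 : PowerSeries ℝ) + PowerSeries.C (m:ℝ) * PowerSeries.X - 1
      = PowerSeries.C (m:ℝ) * PowerSeries.X by ring]
  rw [mul_comm (PowerSeries.C (m:ℝ)) PowerSeries.X, mul_assoc, ← map_mul]
  rw [show (m:ℝ) * (1/(m:ℝ)) = 1 by rw [mul_one_div, div_self hm'], map_one, mul_one]

lemma Es_pc_Gs (l : ℝ) {m : ℕ} (hm : 0 < m) (hl : l ≠ 0) :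
    Es m * pc (Gs l m) (degExp l 1) = 1 := by
  rw [degExp_l_one l hm, pc_Gs_rescale l hm hl (1/(m:ℝ)), rescale_degExp_one hm, Es,
    degExp_mul]
  norm_num [degExp_zero]

end Main


lemma pc_Gs_exp1 (l : ℝ) {m : ℕ} (hm : 0 < m) (hl : l ≠ 0) :
    pc (Gs l m) (degExp l 1) = degExp (m:ℝ) 1 := by
  rw [degExp_l_one l hm, pc_Gs_rescale l hm hl (1/(m:ℝ)), rescale_degExp_one hm]

lemma Es_mul_degExp (m : ℕ) : Es m * degExp (m:ℝ) 1 = 1 := by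
  rw [Es, degExp_mul]
  norm_num [degExp_zero]

/-- the connection coefficients A(a,k) -/
def As (l : ℝ) (m : ℕ) (a k : ℕ) : ℝ :=
  (a ! : ℝ)/(k !) * PowerSeries.coeff a (Es m * (Gs l m)^k)

lemma dW_eq (m : ℕ) (l : ℝ) (k p : ℕ) :
    dW m l k p = (k ! : ℝ)/(p !) * PowerSeries.coeff k (degExp l 1 * (fs l m)^p) := rfl

lemma dW_eq_zero (m : ℕ) (l : ℝ) {k p : ℕ} (h : k < p) : dW m l k p = 0 := by
  rw [dW_eq, PowerSeries.coeff_mul]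
  rw [Finset.sum_eq_zero, mul_zero]
  intro q hq
  rw [Finset.HasAntidiagonal.mem_antidiagonal] at hq
  rw [coeff_pow_eq_zero (constantCoeff_fs l m) p q.2 (by omega), mul_zero]

lemma ortho (l : ℝ) {m : ℕ} (hl : l ≠ 0) (hm : 0 < m) (n a p : ℕ) (ha : a ≤ n) :
    ∑ k ∈ range (n+1), As l m a k * dW m l k p = if a = p then 1 else 0 := by
  have hG := constantCoeff_Gs l m
  set H : PowerSeries ℝ := degExp l 1 * (fs l m)^p with hH
  clear_value H
  have key : ∀ k, As l m a k * dW m l k p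
      = (a ! : ℝ)/(p !) * (PowerSeries.coeff k H * PowerSeries.coeff a (Es m * (Gs l m)^k)) := by
    intro k
    rw [As, dW_eq, ← hH]
    have hk : (k ! : ℝ) ≠ 0 := Nat.cast_ne_zero.mpr (Nat.factorial_ne_zero k)
    have hp : (p ! : ℝ) ≠ 0 := Nat.cast_ne_zero.mpr (Nat.factorial_ne_zero p)
    field_simp
  rw [Finset.sum_congr rfl (fun k _ => key k), ← Finset.mul_sum]
  have hsum : ∑ k ∈ range (n+1), PowerSeries.coeff k H * PowerSeries.coeff a (Es m * (Gs l m)^k)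
      = PowerSeries.coeff a (Es m * pc (Gs l m) H) := by
    have e1 : ∀ k ∈ range (n+1), PowerSeries.coeff k H * PowerSeries.coeff a (Es m * (Gs l m)^k)
        = ∑ q ∈ Finset.HasAntidiagonal.antidiagonal a, PowerSeries.coeff q.1 (Es m)
            * (PowerSeries.coeff k H * PowerSeries.coeff q.2 ((Gs l m)^k)) := by
      intro k _
      rw [PowerSeries.coeff_mul, Finset.mul_sum]
      apply Finset.sum_congr rfl
      intro q _
      ring
    rw [Finset.sum_congr rfl e1, Finset.sum_comm, PowerSeries.coeff_mul]
    apply Finset.sum_congr rfl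
    intro q hq
    rw [Finset.HasAntidiagonal.mem_antidiagonal] at hq
    rw [← Finset.mul_sum]
    congr 1
    have : ∑ k ∈ range (n+1), PowerSeries.coeff k H * PowerSeries.coeff q.2 ((Gs l m)^k)
        = ∑ k ∈ range (q.2+1), PowerSeries.coeff k H * PowerSeries.coeff q.2 ((Gs l m)^k) := by
      apply sum_coeff_ext hG (fun k => PowerSeries.coeff k H) q.2 (n+1) (by omega)
    rw [this, coeff_pc]
  rw [hsum]
  have hpc : pc (Gs l m) H = degExp (m:ℝ) 1 * PowerSeries.X^p := by
    rw [hH, pc_mul hG, pc_pow hG, pc_Gs_fs l hm hl, pc_Gs_exp1 l hm hl]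
  rw [hpc, ← mul_assoc, Es_mul_degExp, one_mul, PowerSeries.coeff_X_pow]
  rcases eq_or_ne a p with rfl | h
  · simp [Nat.factorial_ne_zero]
  · simp [h]

lemma sS1_eval {c : ℝ} (hc : c ≠ 0) (q : ℕ) :
    ∑ i ∈ range (q+1), c^(q-i) * (-1:ℝ)^i * sS1 q i = dfall c (-1) q := by
  have heval : (descPochhammer ℝ q).eval (-1/c) = ∏ i ∈ range q, (-1/c - i) := by
    induction q with
    | zero => simp
    | succ q ih => rw [descPochhammer_succ_eval, ih, Finset.prod_range_succ]
  have hd : dfall c (-1) q = c^q * (descPochhammer ℝ q).eval (-1/c) := by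
    rw [heval]
    unfold dfall
    rw [show c^q = ∏ _i ∈ range q, c from by rw [Finset.prod_const, Finset.card_range]]
    rw [← Finset.prod_mul_distrib]
    apply Finset.prod_congr rfl
    intro i _
    field_simp
  rw [hd, Polynomial.eval_eq_sum_range, descPochhammer_natDegree, Finset.mul_sum]
  apply Finset.sum_congr rfl
  intro i hi
  rw [Finset.mem_range, Nat.lt_succ_iff] at hi
  rw [sS1]
  have hsplit : c^q = c^(q-i) * c^i := by rw [← pow_add]; congr 1; omega
  have hneg : ((-1:ℝ)/c)^i = (-1:ℝ)^i / c^i := by rw [div_pow]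
  rw [hsplit, hneg]
  field_simp

lemma bracket_eq (l : ℝ) {m : ℕ} (hl : l ≠ 0) (hm : 0 < m) (k a : ℕ) :
    ∑ j ∈ Icc k a, ∑ i ∈ range (a-j+1),
        (a.choose j : ℝ) * dS1 (l/m) j k * (m:ℝ)^(a-k-i) * (-1:ℝ)^i * sS1 (a-j) i
      = As l m a k := by
  have hm' : ((m:ℝ)) ≠ 0 := Nat.cast_ne_zero.mpr hm.ne'
  have inner : ∀ j ∈ Icc k a, ∑ i ∈ range (a-j+1),
      (a.choose j : ℝ) * dS1 (l/m) j k * (m:ℝ)^(a-k-i) * (-1:ℝ)^i * sS1 (a-j) i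
        = (a.choose j : ℝ) * dS1 (l/m) j k * ((m:ℝ)^(j-k) * dfall (m:ℝ) (-1) (a-j)) := by
    intro j hj
    rw [Finset.mem_Icc] at hj
    rw [← sS1_eval hm' (a-j), Finset.mul_sum, Finset.mul_sum]
    apply Finset.sum_congr rfl
    intro i hi
    rw [Finset.mem_range, Nat.lt_succ_iff] at hi
    have hp : (m:ℝ)^(a-k-i) = (m:ℝ)^(j-k) * (m:ℝ)^((a-j)-i) := by
      rw [← pow_add]; congr 1; omega
    rw [hp]; ring
  rw [Finset.sum_congr rfl inner]
  have hterm : ∀ j ∈ Icc k a,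
      (a.choose j : ℝ) * dS1 (l/m) j k * ((m:ℝ)^(j-k) * dfall (m:ℝ) (-1) (a-j))
        = (a ! : ℝ)/(k !) * (PowerSeries.coeff j ((Gs l m)^k) * PowerSeries.coeff (a-j) (Es m)) := by
    intro j hj
    rw [Finset.mem_Icc] at hj
    have hGk : PowerSeries.coeff j ((Gs l m)^k)
        = (1/(m:ℝ))^k * ((m:ℝ)^j * PowerSeries.coeff j ((degLog (l/m))^k)) := by
      rw [Gs, mul_pow, ← map_pow, ← map_pow, PowerSeries.coeff_C_mul, PowerSeries.coeff_rescale]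
    rw [hGk, Es, coeff_degExp, dS1]
    have hfac : (a ! : ℝ) = a.choose j * (j ! * (a-j)!) := by
      rw [← Nat.choose_mul_factorial_mul_factorial hj.2]; push_cast; ring
    have hpow : ((m:ℝ))^j = (m:ℝ)^(j-k) * (m:ℝ)^k := by rw [← pow_add]; congr 1; omega
    have h1 : (j ! : ℝ) ≠ 0 := Nat.cast_ne_zero.mpr (Nat.factorial_ne_zero j)
    have h2 : ((a-j)! : ℝ) ≠ 0 := Nat.cast_ne_zero.mpr (Nat.factorial_ne_zero (a-j))
    have h3 : (k ! : ℝ) ≠ 0 := Nat.cast_ne_zero.mpr (Nat.factorial_ne_zero k)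
    have h4 : ((m:ℝ))^k ≠ 0 := pow_ne_zero k hm'
    rw [hfac, hpow]
    field_simp
    rw [mul_assoc _ ((1 / (m:ℝ)) ^ k), ← mul_pow, one_div_mul_cancel hm', one_pow, mul_one]
  rw [Finset.sum_congr rfl hterm]
  rw [As, mul_comm (Es m) ((Gs l m)^k), PowerSeries.coeff_mul,
    Finset.Nat.sum_antidiagonal_eq_sum_range_succ_mk, Finset.mul_sum]
  apply Finset.sum_subset
  · intro j hj
    rw [Finset.mem_Icc] at hj
    rw [Finset.mem_range]
    omega
  · intro j hj hj'
    rw [Finset.mem_range, Nat.lt_succ_iff] at hj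
    rw [Finset.mem_Icc, not_and_or] at hj'
    have hjk : j < k := by omega
    have hzero : PowerSeries.coeff j ((Gs l m)^k) = 0 :=
      coeff_pow_eq_zero (constantCoeff_Gs l m) k j hjk
    rw [hzero, zero_mul, mul_zero]

lemma bern_expand (l : ℝ) (n : ℕ) (x : ℝ) :
    dBernoulliPoly l n x
      = ∑ a ∈ range (n+1), (n.choose a : ℝ) * dBernoulliPoly l (n-a) 0 * dfall l x a := by
  rw [dBernoulliPoly, mul_comm ((divT (degExp l 1 - 1))⁻¹) (degExp l x), PowerSeries.coeff_mul,
    Finset.Nat.sum_antidiagonal_eq_sum_range_succ_mk, Finset.mul_sum]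
  apply Finset.sum_congr rfl
  intro a ha
  rw [Finset.mem_range, Nat.lt_succ_iff] at ha
  rw [coeff_degExp, dBernoulliPoly, degExp_zero, mul_one]
  have hfac : (n ! : ℝ) = n.choose a * (a ! * (n-a)!) := by
    rw [← Nat.choose_mul_factorial_mul_factorial ha]; push_cast; ring
  have h1 : (a ! : ℝ) ≠ 0 := Nat.cast_ne_zero.mpr (Nat.factorial_ne_zero a)
  rw [hfac]
  field_simp

end Aux

theorem stmt10 (l : ℝ) (hl : l ≠ 0) (m : ℕ) (hm : 0 < m) (n : ℕ) (x : ℝ) :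
    dBernoulliPoly l n x =
      ∑ k ∈ range (n + 1),
        (∑ a ∈ range (n + 1), ∑ j ∈ Icc k a, ∑ i ∈ range (a - j + 1),
            n.choose a * a.choose j * dBernoulliPoly l (n - a) 0 * dS1 (l / m) j k *
              (m : ℝ) ^ (a - k - i) * (-1 : ℝ) ^ i * sS1 (a - j) i) *
          dDowling m l k x := by
  have hbr : ∀ k ∈ range (n+1),
      (∑ a ∈ range (n + 1), ∑ j ∈ Icc k a, ∑ i ∈ range (a - j + 1),
            (n.choose a : ℝ) * (a.choose j) * dBernoulliPoly l (n - a) 0 * dS1 (l / m) j k *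
              (m : ℝ) ^ (a - k - i) * (-1 : ℝ) ^ i * sS1 (a - j) i)
        = ∑ a ∈ range (n+1),
            ((n.choose a : ℝ) * dBernoulliPoly l (n - a) 0) * Aux.As l m a k := by
    intro k _
    apply Finset.sum_congr rfl
    intro a _
    rw [← Aux.bracket_eq l hl hm k a, Finset.mul_sum]
    apply Finset.sum_congr rfl
    intro j _
    rw [Finset.mul_sum]
    apply Finset.sum_congr rfl
    intro i _
    ring
  have hdow : ∀ k ∈ range (n+1),
      dDowling m l k x = ∑ p ∈ range (n+1), dW m l k p * dfall l x p := by
    intro k hk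
    rw [Finset.mem_range, Nat.lt_succ_iff] at hk
    rw [dDowling]
    apply Finset.sum_subset
    · intro p hp
      rw [Finset.mem_range] at *
      omega
    · intro p _ hp
      rw [Finset.mem_range, Nat.lt_succ_iff, not_le] at hp
      rw [Aux.dW_eq_zero m l hp, zero_mul]
  symm
  calc
    ∑ k ∈ range (n + 1),
        (∑ a ∈ range (n + 1), ∑ j ∈ Icc k a, ∑ i ∈ range (a - j + 1),
            (n.choose a : ℝ) * (a.choose j) * dBernoulliPoly l (n - a) 0 * dS1 (l / m) j k *
              (m : ℝ) ^ (a - k - i) * (-1 : ℝ) ^ i * sS1 (a - j) i) *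
          dDowling m l k x
      = ∑ k ∈ range (n+1),
          (∑ a ∈ range (n+1), ((n.choose a : ℝ) * dBernoulliPoly l (n - a) 0) * Aux.As l m a k)
            * (∑ p ∈ range (n+1), dW m l k p * dfall l x p) := by
        apply Finset.sum_congr rfl
        intro k hk
        rw [hbr k hk, hdow k hk]
    _ = ∑ k ∈ range (n+1), ∑ a ∈ range (n+1), ∑ p ∈ range (n+1),
          (((n.choose a : ℝ) * dBernoulliPoly l (n - a) 0) * Aux.As l m a k)
            * (dW m l k p * dfall l x p) := by
        apply Finset.sum_congr rfl
        intro k _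
        rw [Finset.sum_mul_sum]
    _ = ∑ a ∈ range (n+1), ∑ p ∈ range (n+1), ∑ k ∈ range (n+1),
          (((n.choose a : ℝ) * dBernoulliPoly l (n - a) 0) * Aux.As l m a k)
            * (dW m l k p * dfall l x p) := by
        rw [Finset.sum_comm]
        apply Finset.sum_congr rfl
        intro a _
        rw [Finset.sum_comm]
    _ = ∑ a ∈ range (n+1), ∑ p ∈ range (n+1),
          (((n.choose a : ℝ) * dBernoulliPoly l (n - a) 0) * dfall l x p)
            * (∑ k ∈ range (n+1), Aux.As l m a k * dW m l k p) := by
        apply Finset.sum_congr rfl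
        intro a _
        apply Finset.sum_congr rfl
        intro p _
        rw [Finset.mul_sum]
        apply Finset.sum_congr rfl
        intro k _
        ring
    _ = ∑ a ∈ range (n+1), ∑ p ∈ range (n+1),
          (((n.choose a : ℝ) * dBernoulliPoly l (n - a) 0) * dfall l x p)
            * (if a = p then 1 else 0) := by
        apply Finset.sum_congr rfl
        intro a ha
        rw [Finset.mem_range, Nat.lt_succ_iff] at ha
        apply Finset.sum_congr rfl
        intro p _
        rw [Aux.ortho l hl hm n a p ha]
    _ = ∑ a ∈ range (n+1), (n.choose a : ℝ) * dBernoulliPoly l (n - a) 0 * dfall l x a := by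
        apply Finset.sum_congr rfl
        intro a ha
        simp only [mul_ite, mul_one, mul_zero]
        rw [Finset.sum_ite_eq, if_pos ha]
    _ = dBernoulliPoly l n x := (Aux.bern_expand l n x).symm

end
end
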